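/- arXiv:2406.14487 — 6 statements merged into one kernel-verified Lean document; each statement's English description precedes it below -/
import Mathlib

section
/- Let w be the finite binary word 00100100. Then the critical exponent of w equals 8/3, and for every infinite binary word y one has E(wy) ≥ 3 (indeed both w0 and w1 are 3-powers). In particular there is no y ∈ {0,1}^ω with E(wy) strictly between 8/3 and 3, which disproves the claim of [Critical, Theorem 7]. -/
/-- `u` is a `p/q`-power: `u = x^n ++ y` with `x` nonempty, `y` a prefix of `x`,
`ℓ(u) = p` and `ℓ(x) = q`. -/
def IsPQPower {α : Type*} (u : List α) (p q : ℕ) : Prop :=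
  0 < p ∧ 0 < q ∧ u.length = p ∧
    ∃ (x y : List α) (n : ℕ), x ≠ [] ∧ 0 < n ∧ y <+: x ∧ x.length = q ∧
      u = (List.replicate n x).flatten ++ y

/-- `u` is an `s`-power for the rational `s`. -/
def IsPowerOfExp {α : Type*} (u : List α) (s : ℚ) : Prop :=
  ∃ p q : ℕ, IsPQPower u p q ∧ s = (p : ℚ) / q

/-- the finite word `u` occurs as a (contiguous) subword of the infinite word `w`. -/
def InfOccurs {α : Type*} (u : List α) (w : ℕ → α) : Prop :=
  ∃ i : ℕ, u = (List.range u.length).map fun k => w (i + k)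

/-- the finite word `w` contains an `r`-power. -/
def ContainsPowFin {α : Type*} (w : List α) (r : ℚ) : Prop :=
  ∃ u : List α, u <:+: w ∧ ∃ s : ℚ, r ≤ s ∧ IsPowerOfExp u s

/-- the infinite word `w` contains an `r`-power. -/
def ContainsPowInf {α : Type*} (w : ℕ → α) (r : ℚ) : Prop :=
  ∃ u : List α, InfOccurs u w ∧ ∃ s : ℚ, r ≤ s ∧ IsPowerOfExp u s

open Classical in
/-- critical exponent of a finite word. -/
noncomputable def Efin {α : Type*} (w : List α) : EReal :=
  if w = [] then 0
  else sSup {x : EReal | ∃ r : ℚ, ContainsPowFin w r ∧ x = ((r : ℝ) : EReal)}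

/-- critical exponent of an infinite word. -/
noncomputable def Einf {α : Type*} (w : ℕ → α) : EReal :=
  sSup {x : EReal | ∃ r : ℚ, ContainsPowInf w r ∧ x = ((r : ℝ) : EReal)}

/-- concatenation of a finite and an infinite word. -/
def wordCat {α : Type*} (w : List α) (y : ℕ → α) : ℕ → α :=
  fun n => if h : n < w.length then w[n] else y (n - w.length)

/-- the `k`-th digit of the base-`b` expansion of `x`, choosing for `b`-adic
rationals the expansion whose digits are ultimately `b - 1`. -/
noncomputable def baseDigit (b : ℕ) (x : ℝ) (k : ℕ) : ℕ :=
  if x ≤ 0 then 0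
  else (⌈x * b ^ (k + 1)⌉ - b * ⌈x * b ^ k⌉ + ((b : ℤ) - 1)).toNat

/-- the base-`b` critical exponent function `κ_b`, with the convention `1/∞ = 0`. -/
noncomputable def kappaBase (b : ℕ) (x : ℝ) : ℝ :=
  1 / (Einf (baseDigit b x)).toReal

/-- the `2`-critical exponent function `κ₂`. -/
noncomputable def kappa2 : ℝ → ℝ := kappaBase 2

/-- The Thue–Morse sequence. -/
def tm : ℕ → Fin 2
  | 0 => 0
  | (n + 1) => if (n + 1) % 2 = 0 then tm ((n + 1) / 2) else 1 - tm ((n + 1) / 2)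
decreasing_by all_goals omega

/-- the real number whose binary expansion is the Thue–Morse sequence. -/
noncomputable def xtau : ℝ := ∑' i : ℕ, ((tm i : ℕ) : ℝ) / 2 ^ (i + 1)


section AuxStmt0
variable {α : Type*}

lemma rep_prefix_aux (x y : List α) (h : y <+: x) :
    ∀ n, (List.replicate n x).flatten ++ y <+: (List.replicate (n+1) x).flatten ++ y := by
  intro n
  induction n with
  | zero => simpa using h.trans (List.prefix_append x y)
  | succ m ih =>
    simp only [List.replicate_succ, List.flatten_cons, List.append_assoc] at *
    exact (List.prefix_append_right_inj x).2 ih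

lemma periodic_decomp_aux (q : ℕ) (hq : 0 < q) : ∀ m (u : List α), u.length ≤ m →
    q ≤ u.length → u.drop q <+: u →
    ∃ x y n, x ≠ ([] : List α) ∧ 0 < n ∧ y <+: x ∧ x.length = q ∧
      u = (List.replicate n x).flatten ++ y := by
  intro m
  induction m with
  | zero => intro u hm hqp _; omega
  | succ m ih =>
    intro u hm hqp hdrop
    by_cases h2 : u.length < 2 * q
    · refine ⟨u.take q, u.drop q, 1, ?_, one_pos, ?_, ?_, by simp⟩
      · intro h
        have hlen := congrArg List.length h
        simp only [List.length_take, List.length_nil] at hlen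
        omega
      · have hy : u.drop q = (u.take q).take (u.drop q).length := by
          rw [List.take_take]
          have h3 : (u.drop q).length ⊓ q = (u.drop q).length := by simp; omega
          rw [h3, ← List.prefix_iff_eq_take.1 hdrop]
        rw [hy]; exact List.take_prefix _ _
      · simp; omega
    · push_neg at h2
      obtain ⟨t, ht⟩ := hdrop
      have hvq : q ≤ (u.drop q).length := by simp; omega
      have hdrop2 : (u.drop q).drop q <+: u.drop q := by
        refine ⟨t, ?_⟩
        have h4 : (u.drop q ++ t).drop q = (u.drop q).drop q ++ t :=
          List.drop_append_of_le_length hvq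
        rw [ht] at h4
        exact h4.symm
      obtain ⟨x, y, n, hx, hn, hyx, hxq, hu⟩ := ih (u.drop q) (by simp; omega) hvq hdrop2
      have hxpre : x <+: u := by
        have h1 : x <+: u.drop q := by
          rw [hu]
          obtain ⟨k, rfl⟩ : ∃ k, n = k + 1 := ⟨n - 1, by omega⟩
          rw [List.replicate_succ, List.flatten_cons, List.append_assoc]
          exact List.prefix_append x _
        exact h1.trans ⟨t, ht⟩
      refine ⟨x, y, n + 1, hx, Nat.succ_pos n, hyx, hxq, ?_⟩
      have hxt : x = u.take q := by
        rw [List.prefix_iff_eq_take.1 hxpre, hxq]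
      rw [List.replicate_succ, List.flatten_cons, List.append_assoc, ← hu, hxt,
        List.take_append_drop]

lemma pq_iff_aux (u : List α) (p q : ℕ) :
    IsPQPower u p q ↔ 0 < p ∧ 0 < q ∧ u.length = p ∧ q ≤ p ∧ u.drop q <+: u := by
  constructor
  · rintro ⟨hp, hq, hl, x, y, n, hx, hn, hyx, hxq, rfl⟩
    obtain ⟨m, rfl⟩ : ∃ m, n = m + 1 := ⟨n - 1, by omega⟩
    have hflat : (List.replicate (m+1) x).flatten = x ++ (List.replicate m x).flatten := by
      simp [List.replicate_succ]
    refine ⟨hp, hq, hl, ?_, ?_⟩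
    · rw [← hl, hflat]; simp only [List.length_append, ← hxq]; omega
    · have hdrop : ((List.replicate (m+1) x).flatten ++ y).drop q
          = (List.replicate m x).flatten ++ y := by
        rw [hflat, List.append_assoc, ← hxq, List.drop_left]
      rw [hdrop]; exact rep_prefix_aux x y hyx m
  · rintro ⟨hp, hq, hl, hqp, hdrop⟩
    refine ⟨hp, hq, hl, ?_⟩
    exact periodic_decomp_aux q hq u.length u le_rfl (by omega) hdrop

lemma main_check_aux : ∀ u ∈ (([0,0,1,0,0,1,0,0] : List (Fin 2)).tails.flatMap List.inits),
    ∀ q ∈ List.range 9, 0 < q → q ≤ u.length → u.drop q <+: u → 3 * u.length ≤ 8 * q := by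
  decide

lemma exp_bound_aux (u : List (Fin 2)) (hu : u <:+: ([0,0,1,0,0,1,0,0] : List (Fin 2)))
    (s : ℚ) (hs : IsPowerOfExp u s) : s ≤ 8 / 3 := by
  obtain ⟨p, q, hpq, rfl⟩ := hs
  rw [pq_iff_aux] at hpq
  obtain ⟨hp, hq, hl, hqp, hdrop⟩ := hpq
  have hmem : u ∈ (([0,0,1,0,0,1,0,0] : List (Fin 2)).tails.flatMap List.inits) := by
    rw [List.mem_flatMap]
    obtain ⟨t, htp, hts⟩ := List.infix_iff_prefix_suffix.1 hu
    exact ⟨t, (List.mem_tails _ _).2 hts, (List.mem_inits _ _).2 htp⟩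
  have hlen8 : u.length ≤ 8 := hu.length_le
  have hq9 : q ∈ List.range 9 := by rw [List.mem_range]; omega
  have key : 3 * u.length ≤ 8 * q := main_check_aux u hmem q hq9 hq (by omega) hdrop
  rw [div_le_div_iff₀ (by exact_mod_cast hq) (by norm_num)]
  subst hl
  exact_mod_cast (by omega : u.length * 3 ≤ 8 * q)

lemma three_le_Einf_aux (y : ℕ → Fin 2) :
    ((3 : ℝ) : EReal) ≤ Einf (wordCat ([0, 0, 1, 0, 0, 1, 0, 0] : List (Fin 2)) y) := by
  have hy2 : y 0 = 0 ∨ y 0 = 1 := by omega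
  have hocc : ∃ u : List (Fin 2),
      InfOccurs u (wordCat ([0, 0, 1, 0, 0, 1, 0, 0] : List (Fin 2)) y) ∧ IsPowerOfExp u 3 := by
    rcases hy2 with h0 | h1
    · refine ⟨[0,0,0], ⟨6, ?_⟩, 3, 1, ?_, by norm_num⟩
      · simp [wordCat, List.range_succ, h0]
      · exact ⟨by norm_num, by norm_num, rfl, [0], [], 3, by simp, by norm_num,
          List.nil_prefix, rfl, by decide⟩
    · refine ⟨[0,0,1,0,0,1,0,0,1], ⟨0, ?_⟩, 9, 3, ?_, by norm_num⟩
      · simp [wordCat, List.range_succ, h1]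
      · exact ⟨by norm_num, by norm_num, rfl, [0,0,1], [], 3, by simp, by norm_num,
          List.nil_prefix, rfl, by decide⟩
  obtain ⟨u, hocc, hpow⟩ := hocc
  apply le_sSup
  exact ⟨3, ⟨u, hocc, 3, le_refl 3, hpow⟩, by norm_num⟩
end AuxStmt0

lemma eight_thirds_aux : (((8 : ℝ) / 3) : EReal) = (((8/3 : ℚ) : ℝ) : EReal) := by
  rw [show ((8/3:ℚ):ℝ) = (8:ℝ)/3 by norm_num, EReal.coe_div]
  norm_cast

theorem stmt_0 :
    Efin ([0, 0, 1, 0, 0, 1, 0, 0] : List (Fin 2)) = (((8 : ℝ) / 3) : EReal) ∧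
    (∀ y : ℕ → Fin 2,
      ((3 : ℝ) : EReal) ≤ Einf (wordCat ([0, 0, 1, 0, 0, 1, 0, 0] : List (Fin 2)) y)) ∧
    ¬ ∃ y : ℕ → Fin 2,
      (((8 : ℝ) / 3) : EReal) < Einf (wordCat ([0, 0, 1, 0, 0, 1, 0, 0] : List (Fin 2)) y) ∧
        Einf (wordCat ([0, 0, 1, 0, 0, 1, 0, 0] : List (Fin 2)) y) < ((3 : ℝ) : EReal) := by
  have w8 : Efin ([0, 0, 1, 0, 0, 1, 0, 0] : List (Fin 2)) = (((8 : ℝ) / 3) : EReal) := by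
    rw [Efin, if_neg (by simp)]
    apply le_antisymm
    · apply sSup_le
      rintro x ⟨r, ⟨u, hinf, s, hrs, hpow⟩, rfl⟩
      have hs : s ≤ 8 / 3 := exp_bound_aux u hinf s hpow
      have hr : r ≤ 8 / 3 := hrs.trans hs
      rw [eight_thirds_aux]
      exact EReal.coe_le_coe_iff.2 (by exact_mod_cast hr)
    · apply le_sSup
      refine ⟨8/3, ⟨[0, 0, 1, 0, 0, 1, 0, 0], List.infix_rfl, 8/3, le_refl _,
        8, 3, ⟨by norm_num, by norm_num, rfl, [0,0,1], [0,0], 2, by simp, by norm_num,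
          ⟨[1], rfl⟩, rfl, by decide⟩, by norm_num⟩, eight_thirds_aux⟩
  refine ⟨w8, three_le_Einf_aux, ?_⟩
  rintro ⟨y, _, hlt⟩
  exact absurd hlt (not_lt_of_ge (three_le_Einf_aux y))
end

section
/- The 2-critical exponent function κ₂ : [0,1] → [0,1] is upper semi-continuous. -/
lemma ceil_stable {y z : ℝ} (m : ℕ) (h : ⌈y * 2 ^ m⌉ = ⌈z * 2 ^ m⌉) : ⌈y⌉ = ⌈z⌉ := by
  have h2 : (0 : ℝ) < 2 ^ m := by positivity
  have key : ∀ a b : ℝ, ⌈a * 2 ^ m⌉ ≤ ⌈b * 2 ^ m⌉ → ⌈a⌉ ≤ ⌈b⌉ := by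
    intro a b hab
    apply Int.ceil_le.mpr
    have h1 : a * 2 ^ m ≤ (⌈b⌉ : ℝ) * 2 ^ m := by
      have hb : (⌈b * 2 ^ m⌉ : ℤ) ≤ ⌈b⌉ * 2 ^ m := by
        apply Int.ceil_le.mpr
        push_cast
        exact mul_le_mul_of_nonneg_right (Int.le_ceil b) h2.le
      calc a * 2 ^ m ≤ (⌈a * 2 ^ m⌉ : ℝ) := Int.le_ceil _
        _ ≤ ((⌈b⌉ * 2 ^ m : ℤ) : ℝ) := by exact_mod_cast hab.trans hb
        _ = (⌈b⌉ : ℝ) * 2 ^ m := by push_cast; ring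
    exact le_of_mul_le_mul_right h1 h2
  exact le_antisymm (key _ _ h.le) (key _ _ h.ge)

lemma ceil_eq_of_mul (a : ℤ) (m : ℕ) {y : ℝ} (h : ⌈y * 2 ^ m⌉ = a * 2 ^ m) : ⌈y⌉ = a := by
  have : ⌈y⌉ = ⌈(a : ℝ)⌉ := by
    apply ceil_stable m
    rw [h]
    rw [show ((a : ℝ) * 2 ^ m) = ((a * 2 ^ m : ℤ) : ℝ) by push_cast; ring, Int.ceil_intCast]
  simpa using this

lemma ceil_eq_of_mul_add_one (a : ℤ) (m : ℕ) {y : ℝ} (h : ⌈y * 2 ^ m⌉ = a * 2 ^ m + 1) :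
    ⌈y⌉ = a + 1 := by
  have h2 : (0 : ℝ) < 2 ^ m := by positivity
  have h2' : (1 : ℝ) ≤ 2 ^ m := one_le_pow₀ (by norm_num)
  have hub : y * 2 ^ m ≤ ((a : ℝ) * 2 ^ m + 1) := by
    have := Int.le_ceil (y * 2 ^ m); rw [h] at this; push_cast at this; linarith
  have hlb : (a : ℝ) * 2 ^ m < y * 2 ^ m := by
    have := Int.ceil_lt_add_one (y * 2 ^ m); rw [h] at this; push_cast at this; linarith
  rw [Int.ceil_eq_iff]
  constructor
  · push_cast
    have : (a : ℝ) < y := by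
      have := lt_of_mul_lt_mul_right hlb h2.le
      linarith
    linarith
  · push_cast
    have : y * 2 ^ m ≤ ((a : ℝ) + 1) * 2 ^ m := by nlinarith
    exact le_of_mul_le_mul_right this h2

lemma baseDigit_pos_eq {x : ℝ} (hx : 0 < x) (k : ℕ) :
    baseDigit 2 x k = (⌈x * 2 ^ (k + 1)⌉ - 2 * ⌈x * 2 ^ k⌉ + 1).toNat := by
  rw [baseDigit, if_neg (not_le.mpr hx)]
  norm_num

lemma digit_agree {x x' : ℝ} (hx : 0 < x) (hx' : 0 < x') {N : ℕ}
    (h : ⌈x' * 2 ^ N⌉ = ⌈x * 2 ^ N⌉) {k : ℕ} (hk : k < N) :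
    baseDigit 2 x' k = baseDigit 2 x k := by
  have key : ∀ j ≤ N, ⌈x' * 2 ^ j⌉ = ⌈x * 2 ^ j⌉ := by
    intro j hj
    apply ceil_stable (N - j)
    rw [mul_assoc, mul_assoc, ← pow_add, Nat.add_sub_cancel' hj]
    exact h
  rw [baseDigit_pos_eq hx' k, baseDigit_pos_eq hx k, key k hk.le, key (k + 1) hk]

lemma run_ones {x' : ℝ} (hx' : 0 < x') {N M : ℕ} (c : ℤ)
    (h : ⌈x' * 2 ^ N⌉ = c * 2 ^ (N - M)) {k : ℕ} (hMk : M ≤ k) (hkN : k < N) :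
    baseDigit 2 x' k = 1 := by
  have key : ∀ j, M ≤ j → j ≤ N → ⌈x' * 2 ^ j⌉ = c * 2 ^ (j - M) := by
    intro j hMj hjN
    apply ceil_eq_of_mul (c * 2 ^ (j - M)) (N - j)
    rw [mul_assoc, ← pow_add, Nat.add_sub_cancel' hjN, h, mul_assoc, ← pow_add]
    have he : j - M + (N - j) = N - M := by omega
    rw [he]
  rw [baseDigit_pos_eq hx' k, key k hMk hkN.le, key (k + 1) (by omega) hkN]
  have hexp : (2 : ℤ) ^ (k + 1 - M) = 2 ^ (k - M) * 2 := by
    rw [← pow_succ]; congr 1; omega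
  rw [hexp]
  have : c * (2 ^ (k - M) * 2) - 2 * (c * 2 ^ (k - M)) + 1 = 1 := by ring
  rw [this]; rfl

lemma run_zeros {x' : ℝ} (hx' : 0 < x') {N M : ℕ} (c : ℤ)
    (h : ⌈x' * 2 ^ N⌉ = c * 2 ^ (N - M) + 1) {k : ℕ} (hMk : M ≤ k) (hkN : k < N) :
    baseDigit 2 x' k = 0 := by
  have key : ∀ j, M ≤ j → j ≤ N → ⌈x' * 2 ^ j⌉ = c * 2 ^ (j - M) + 1 := by
    intro j hMj hjN
    apply ceil_eq_of_mul_add_one (c * 2 ^ (j - M)) (N - j)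
    rw [mul_assoc, ← pow_add, Nat.add_sub_cancel' hjN, h, mul_assoc, ← pow_add]
    have he : j - M + (N - j) = N - M := by omega
    rw [he]
  rw [baseDigit_pos_eq hx' k, key k hMk hkN.le, key (k + 1) (by omega) hkN]
  have hexp : (2 : ℤ) ^ (k + 1 - M) = 2 ^ (k - M) * 2 := by
    rw [← pow_succ]; congr 1; omega
  rw [hexp]
  have : c * (2 ^ (k - M) * 2) + 1 - 2 * (c * 2 ^ (k - M) + 1) + 1 = 0 := by ring
  rw [this]; rfl

lemma flatten_replicate_singleton {α : Type*} (n : ℕ) (v : α) :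
    (List.replicate n [v]).flatten = List.replicate n v := by
  induction n with
  | zero => rfl
  | succ n ih => simp [List.replicate_succ, ih]

lemma containsRun (w : ℕ → ℕ) (v i L : ℕ) (hL : 0 < L) (h : ∀ j < L, w (i + j) = v) :
    ContainsPowInf w (L : ℚ) := by
  refine ⟨List.replicate L v, ⟨i, ?_⟩, (L : ℚ), le_refl _, L, 1, ⟨hL, one_pos, by simp,
    [v], [], L, by simp, hL, List.nil_prefix, by simp, by
      rw [flatten_replicate_singleton, List.append_nil]⟩, by simp⟩
  symm
  rw [List.eq_replicate_iff]
  constructor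
  · simp
  · intro b hb
    simp only [List.mem_map, List.mem_range, List.length_replicate] at hb
    obtain ⟨k, hk, rfl⟩ := hb
    exact h k hk

lemma einf_ge {w : ℕ → ℕ} {r : ℚ} (h : ContainsPowInf w r) : ((r : ℝ) : EReal) ≤ Einf w :=
  le_sSup ⟨r, h, rfl⟩

lemma einf_one (w : ℕ → ℕ) : (1 : EReal) ≤ Einf w := by
  have := einf_ge (containsRun w (w 0) 0 1 one_pos (by intro j hj; interval_cases j; rfl))
  simpa using this

lemma einf_toReal_nonneg (w : ℕ → ℕ) : 0 ≤ (Einf w).toReal := by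
  by_cases hT : Einf w = ⊤
  · simp [hT]
  · have := EReal.toReal_le_toReal (einf_one w) (by exact_mod_cast EReal.coe_ne_bot (1:ℝ)) hT
    simp at this
    linarith

lemma kappa2_nonneg (x : ℝ) : 0 ≤ kappa2 x :=
  one_div_nonneg.mpr (einf_toReal_nonneg _)

lemma kappa2_le {x' : ℝ} {c : ℝ} (hc : 0 < c) (h : (c : EReal) ≤ Einf (baseDigit 2 x')) :
    kappa2 x' ≤ 1 / c := by
  show 1 / (Einf (baseDigit 2 x')).toReal ≤ 1 / c
  by_cases hT : Einf (baseDigit 2 x') = ⊤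
  · rw [hT]; simp; positivity
  · have : c ≤ (Einf (baseDigit 2 x')).toReal := by
      have := EReal.toReal_le_toReal h (by simp) hT
      simpa using this
    exact one_div_le_one_div_of_le hc this

theorem stmt_3 : UpperSemicontinuousOn kappa2 (Set.Icc (0 : ℝ) 1) := by
  intro x hx y hy
  by_cases hdy : ∃ (M : ℕ) (c : ℤ), x * 2 ^ M = (c : ℝ)
  · -- dyadic case
    obtain ⟨M, c, hc⟩ := hdy
    have hy0 : 0 < y := lt_of_le_of_lt (kappa2_nonneg x) hy
    set L : ℕ := ⌈1 / y⌉₊ + 1 with hLdef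
    have hL0 : 0 < L := Nat.succ_pos _
    have hLy : (1 / y : ℝ) < L := by
      calc (1 / y : ℝ) ≤ ⌈1 / y⌉₊ := Nat.le_ceil _
        _ < L := by exact_mod_cast Nat.lt_succ_self _
    have hLR : (0 : ℝ) < L := by exact_mod_cast hL0
    have hinvL : 1 / (L : ℝ) < y := by
      rw [div_lt_iff₀ hLR]
      have := (div_lt_iff₀ hy0).mp hLy
      linarith
    set N : ℕ := M + L with hNdef
    have hδ : (0 : ℝ) < 1 / 2 ^ N := by positivity
    filter_upwards [nhdsWithin_le_nhds (Metric.ball_mem_nhds x hδ), self_mem_nhdsWithin]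
      with x' hball hx'mem
    have hdist : |x' - x| < 1 / 2 ^ N := by
      rw [Metric.mem_ball, Real.dist_eq] at hball; exact hball
    have key : ∃ v : ℕ, ∀ j < L, baseDigit 2 x' (M + j) = v := by
      by_cases hx'0 : x' ≤ 0
      · exact ⟨0, fun j hj => by rw [baseDigit, if_pos hx'0]⟩
      · push_neg at hx'0
        have h2N : (0 : ℝ) < 2 ^ N := by positivity
        have hxN : x * 2 ^ N = ((c * 2 ^ (N - M) : ℤ) : ℝ) := by
          have hNM : N - M = L := by omega
          rw [hNdef, pow_add, ← mul_assoc, hc, hNM]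
          push_cast
          ring
        have hbnd : |x' * 2 ^ N - x * 2 ^ N| < 1 := by
          rw [← sub_mul, abs_mul, abs_of_pos h2N]
          calc |x' - x| * 2 ^ N < (1 / 2 ^ N) * 2 ^ N :=
                mul_lt_mul_of_pos_right hdist h2N
            _ = 1 := by field_simp
        rw [hxN] at hbnd
        rw [abs_sub_lt_iff] at hbnd
        push_cast at hbnd
        rcases le_or_gt (x' * 2 ^ N) ((c : ℝ) * 2 ^ (N - M)) with hle | hlt
        · have hceil2 : ⌈x' * 2 ^ N⌉ = c * 2 ^ (N - M) := by
            rw [Int.ceil_eq_iff]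
            constructor
            · push_cast; linarith [hbnd.2]
            · push_cast; linarith
          exact ⟨1, fun j hj => run_ones hx'0 c hceil2 (by omega) (by omega)⟩
        · have hceil2 : ⌈x' * 2 ^ N⌉ = c * 2 ^ (N - M) + 1 := by
            rw [Int.ceil_eq_iff]
            constructor
            · push_cast; linarith
            · push_cast; linarith [hbnd.1]
          exact ⟨0, fun j hj => run_zeros hx'0 c hceil2 (by omega) (by omega)⟩
    obtain ⟨v, hv⟩ := key
    have hcp := containsRun (baseDigit 2 x') v M L hL0 hv
    have hge := einf_ge hcp
    have hge' : ((L : ℝ) : EReal) ≤ Einf (baseDigit 2 x') := by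
      have hq : ((L : ℚ) : ℝ) = (L : ℝ) := by push_cast; rfl
      rwa [hq] at hge
    calc kappa2 x' ≤ 1 / (L : ℝ) := kappa2_le hLR hge'
      _ < y := hinvL
  · -- non-dyadic case
    have hx0 : 0 < x := by
      rcases hx.1.lt_or_eq with h | h
      · exact h
      · exfalso; exact hdy ⟨0, 0, by rw [← h]; norm_num⟩
    -- choose c : 1/y < c, 0 < c, (c : EReal) < Einf (baseDigit 2 x)
    have hchoice : ∃ cR : ℝ, 0 < cR ∧ 1 / cR < y ∧ ((cR : ℝ) : EReal) < Einf (baseDigit 2 x) := by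
      by_cases hT : Einf (baseDigit 2 x) = ⊤
      · have hk0 : kappa2 x = 0 := by
          show 1 / (Einf (baseDigit 2 x)).toReal = 0
          rw [hT]; simp
        have hy0 : 0 < y := by rw [hk0] at hy; exact hy
        refine ⟨1 / y + 1, by positivity, ?_, by rw [hT]; exact EReal.coe_lt_top _⟩
        rw [div_lt_iff₀ (by positivity)]
        have h1 : y * (1 / y) = 1 := mul_one_div_cancel hy0.ne'
        nlinarith [h1, hy0]
      · have hB : Einf (baseDigit 2 x) ≠ ⊥ := by
          intro h
          have := einf_one (baseDigit 2 x)
          rw [h] at this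
          exact absurd (le_bot_iff.mp this) (by exact_mod_cast EReal.coe_ne_bot (1:ℝ))
        set e : ℝ := (Einf (baseDigit 2 x)).toReal with hedef
        have hE : Einf (baseDigit 2 x) = (e : EReal) := (EReal.coe_toReal hT hB).symm
        have he1 : (1 : ℝ) ≤ e := by
          have := EReal.toReal_le_toReal (einf_one (baseDigit 2 x))
            (by exact_mod_cast EReal.coe_ne_bot (1:ℝ)) hT
          simpa using this
        have he0 : 0 < e := by linarith
        have hk : kappa2 x = 1 / e := rfl
        rw [hk] at hy
        have hy0 : 0 < y := lt_trans (by positivity) hy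
        have hye : 1 / y < e := by
          rw [div_lt_iff₀ hy0]
          have := (div_lt_iff₀ he0).mp hy
          linarith
        refine ⟨(1 / y + e) / 2, by positivity, ?_, ?_⟩
        · rw [div_lt_iff₀ (by positivity)]
          have h1 : y * (1 / y) = 1 := mul_one_div_cancel hy0.ne'
          nlinarith [h1, mul_pos hy0 (show (0 : ℝ) < e - 1 / y by linarith)]
        · rw [hE]
          exact_mod_cast (by linarith : (1 / y + e) / 2 < e)
    obtain ⟨cR, hcR0, hcRy, hcRE⟩ := hchoice
    obtain ⟨a, ⟨r, hr, rfl⟩, hca⟩ := lt_sSup_iff.mp hcRE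
    have hcr : cR < (r : ℝ) := by exact_mod_cast hca
    obtain ⟨u, ⟨i, hu⟩, s', hs', hpow⟩ := hr
    set N : ℕ := i + u.length + 1 with hNdef
    set cN : ℤ := ⌈x * 2 ^ N⌉ with hcNdef
    have h2N : (0 : ℝ) < 2 ^ N := by positivity
    have hlb : (cN : ℝ) - 1 < x * 2 ^ N := by
      have := Int.ceil_lt_add_one (x * 2 ^ N)
      rw [← hcNdef] at this
      linarith
    have hub : x * 2 ^ N < cN := by
      rcases (Int.le_ceil (x * 2 ^ N)).lt_or_eq with h | h
      · exact h
      · exfalso; exact hdy ⟨N, cN, h⟩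
    set δ : ℝ := min (x - ((cN : ℝ) - 1) / 2 ^ N) ((cN : ℝ) / 2 ^ N - x) with hδdef
    have hδ0 : 0 < δ := by
      apply lt_min
      · rw [sub_pos, div_lt_iff₀ h2N]; linarith
      · rw [sub_pos, lt_div_iff₀ h2N]; linarith
    filter_upwards [nhdsWithin_le_nhds (Metric.ball_mem_nhds x hδ0), self_mem_nhdsWithin]
      with x' hball hx'mem
    have hdist : |x' - x| < δ := by
      rw [Metric.mem_ball, Real.dist_eq] at hball; exact hball
    rw [abs_sub_lt_iff] at hdist
    have hlo : ((cN : ℝ) - 1) / 2 ^ N < x' := by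
      have h1 : δ ≤ x - ((cN : ℝ) - 1) / 2 ^ N := min_le_left _ _
      linarith [hdist.2]
    have hhi : x' < (cN : ℝ) / 2 ^ N := by
      have h2 : δ ≤ (cN : ℝ) / 2 ^ N - x := min_le_right _ _
      linarith [hdist.1]
    have hcN1 : 1 ≤ cN := by
      have : 0 < cN := by rw [hcNdef]; exact Int.ceil_pos.mpr (by positivity)
      omega
    have hx'0 : 0 < x' := by
      have : (0 : ℝ) ≤ ((cN : ℝ) - 1) / 2 ^ N := by
        apply div_nonneg _ h2N.le
        have : (1 : ℝ) ≤ (cN : ℝ) := by exact_mod_cast hcN1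
        linarith
      linarith
    have hceil' : ⌈x' * 2 ^ N⌉ = ⌈x * 2 ^ N⌉ := by
      rw [← hcNdef, Int.ceil_eq_iff]
      constructor
      · rw [div_lt_iff₀ h2N] at hlo
        push_cast
        linarith
      · rw [lt_div_iff₀ h2N] at hhi
        exact hhi.le
    have hocc : ContainsPowInf (baseDigit 2 x') r := by
      refine ⟨u, ⟨i, ?_⟩, s', hs', hpow⟩
      conv_lhs => rw [hu]
      apply List.map_congr_left
      intro k hk
      rw [List.mem_range] at hk
      exact digit_agree hx'0 hx0 hceil'.symm (show i + k < N by omega)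
    have hge : ((r : ℝ) : EReal) ≤ Einf (baseDigit 2 x') := einf_ge hocc
    have hge' : ((cR : ℝ) : EReal) ≤ Einf (baseDigit 2 x') :=
      le_trans (by exact_mod_cast hcr.le) hge
    calc kappa2 x' ≤ 1 / cR := kappa2_le hcR0 hge'
      _ < y := hcRy
end

section
/- The 2-critical exponent function κ₂ : [0,1] → [0,1] is of Baire class 1, i.e., there exists a sequence of continuous functions f_k : [0,1] → ℝ converging pointwise to κ₂ on [0,1]. -/
namespace Stmt4

abbrev pref (w : ℕ → ℕ) (k : ℕ) : List ℕ := (List.range k).map w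

lemma pref_length (w : ℕ → ℕ) (k : ℕ) : (pref w k).length = k := by simp

lemma pref_prefix (w : ℕ → ℕ) {k l : ℕ} (h : k ≤ l) : pref w k <+: pref w l := by
  have h2 : List.range k <+: List.range l := by
    have h1 : List.take k (List.range l) = List.range (min k l) := List.take_range
    rw [min_eq_left h] at h1
    exact h1 ▸ List.take_prefix _ _
  exact h2.map w

lemma sub_pref (w : ℕ → ℕ) {i l k : ℕ} (h : i + l ≤ k) :
    ((pref w k).drop i).take l = (List.range l).map (fun j => w (i + j)) := by
  apply List.ext_getElem
  · simp; omega
  · intro n h₁ h₂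
    simp [List.getElem_take, List.getElem_drop]

lemma infOccurs_of_infix_pref {u : List ℕ} {w : ℕ → ℕ} {k : ℕ}
    (h : u <:+: pref w k) : InfOccurs u w := by
  obtain ⟨s, t, hst⟩ := h
  refine ⟨s.length, ?_⟩
  have hlen : s.length + u.length ≤ k := by
    have := congrArg List.length hst
    simp at this; omega
  have h1 : u = ((pref w k).drop s.length).take u.length := by
    rw [← hst, List.append_assoc, List.drop_left' rfl, List.take_left' rfl]
  rw [h1, sub_pref w hlen]
  congr 1
  rw [h1]; simp

lemma infix_pref_of_occurs {u : List ℕ} {w : ℕ → ℕ} (h : InfOccurs u w) :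
    ∃ k, u <:+: pref w k := by
  obtain ⟨i, hi⟩ := h
  refine ⟨i + u.length, pref w i, [], ?_⟩
  rw [List.append_nil]
  show _ = (List.range (i + u.length)).map w
  rw [List.range_add, List.map_append, List.map_map]
  congr 1

lemma containsPowFin_mono {w v : List ℕ} {r : ℚ} (h : ContainsPowFin w r) (hwv : w <:+: v) :
    ContainsPowFin v r := by
  obtain ⟨u, hu, s, hs⟩ := h
  exact ⟨u, hu.trans hwv, s, hs⟩

lemma containsPowInf_of_pref {w : ℕ → ℕ} {k : ℕ} {r : ℚ} (h : ContainsPowFin (pref w k) r) :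
    ContainsPowInf w r := by
  obtain ⟨u, hu, s, hs⟩ := h
  exact ⟨u, infOccurs_of_infix_pref hu, s, hs⟩

lemma exists_pref_of_containsPowInf {w : ℕ → ℕ} {r : ℚ} (h : ContainsPowInf w r) :
    ∃ k, ContainsPowFin (pref w k) r := by
  obtain ⟨u, hu, s, hs⟩ := h
  obtain ⟨k, hk⟩ := infix_pref_of_occurs hu
  exact ⟨k, u, hk, s, hs⟩

lemma isPowerOfExp_single (a : ℕ) : IsPowerOfExp [a] 1 :=
  ⟨1, 1, ⟨one_pos, one_pos, rfl, [a], [], 1, by simp, one_pos, List.nil_prefix, rfl, by simp⟩,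
    by norm_num⟩

lemma flatten_replicate_singleton (n : ℕ) (a : ℕ) :
    (List.replicate n [a]).flatten = List.replicate n a := by
  induction n with
  | zero => simp
  | succ n ih => simp [List.replicate_succ, ih]

lemma isPowerOfExp_replicate {n : ℕ} (hn : 0 < n) (a : ℕ) :
    IsPowerOfExp (List.replicate n a) (n : ℚ) :=
  ⟨n, 1, ⟨hn, one_pos, by simp, [a], [], n, by simp, hn, List.nil_prefix, rfl,
    by simp [flatten_replicate_singleton]⟩, by norm_num⟩

lemma le_Einf_of_containsPowInf {w : ℕ → ℕ} {r : ℚ} (h : ContainsPowInf w r) :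
    (((r : ℝ)) : EReal) ≤ Einf w := le_sSup ⟨r, h, rfl⟩

lemma one_le_Einf (w : ℕ → ℕ) : ((1 : ℝ) : EReal) ≤ Einf w := by
  have h : ContainsPowInf w 1 :=
    ⟨[w 0], ⟨0, by simp [List.range_succ]⟩, 1, le_refl _, isPowerOfExp_single _⟩
  simpa using le_Einf_of_containsPowInf h

lemma le_Efin_of_containsPowFin {w : List ℕ} (hw : w ≠ []) {r : ℚ} (h : ContainsPowFin w r) :
    (((r : ℝ)) : EReal) ≤ Efin w := by
  rw [Efin, if_neg hw]; exact le_sSup ⟨r, h, rfl⟩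

lemma one_le_Efin {w : List ℕ} (hw : w ≠ []) : ((1 : ℝ) : EReal) ≤ Efin w := by
  obtain ⟨a, t, rfl⟩ := List.exists_cons_of_ne_nil hw
  have h : ContainsPowFin (a :: t) 1 :=
    ⟨[a], ⟨[], t, by simp⟩, 1, le_refl _, isPowerOfExp_single a⟩
  simpa using le_Efin_of_containsPowFin (by simp) h

lemma Efin_nonneg (w : List ℕ) : (0 : EReal) ≤ Efin w := by
  by_cases h : w = []
  · simp [Efin, h]
  · refine le_trans ?_ (one_le_Efin h)
    norm_num

lemma Efin_le_length (w : List ℕ) : Efin w ≤ ((w.length : ℝ) : EReal) := by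
  by_cases h : w = []
  · simp [Efin, h]
  · rw [Efin, if_neg h]
    apply sSup_le
    rintro z ⟨r, ⟨u, hu, s, hrs, p, q, ⟨hp, hq, hlen, -⟩, hspq⟩, rfl⟩
    have hql : u.length ≤ w.length := hu.length_le
    have hr : r ≤ (w.length : ℚ) := by
      calc r ≤ s := hrs
      _ = (p : ℚ) / q := hspq
      _ ≤ (p : ℚ) := div_le_self (by positivity) (by exact_mod_cast hq)
      _ ≤ (w.length : ℚ) := by exact_mod_cast hlen ▸ hql
    exact_mod_cast hr

lemma ne_nil_of_containsPowFin {w : List ℕ} {r : ℚ} (h : ContainsPowFin w r) : w ≠ [] := by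
  rintro rfl
  obtain ⟨u, hu, s, -, p, q, ⟨hp, -, hlen, -⟩, -⟩ := h
  rw [List.infix_nil] at hu
  subst hu
  simp at hlen
  omega

lemma Efin_mono {u v : List ℕ} (h : u <:+: v) : Efin u ≤ Efin v := by
  by_cases hu : u = []
  · subst hu
    simpa [Efin] using Efin_nonneg v
  · have hv : v ≠ [] := by
      rintro rfl
      exact hu (List.infix_nil.mp h)
    rw [Efin, if_neg hu, Efin, if_neg hv]
    apply sSup_le
    rintro z ⟨r, hr, rfl⟩
    exact le_sSup ⟨r, containsPowFin_mono hr h, rfl⟩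

lemma Efin_pref_le_Einf (w : ℕ → ℕ) (k : ℕ) : Efin (pref w k) ≤ Einf w := by
  by_cases h : pref w k = []
  · rw [Efin, if_pos h]
    refine le_trans ?_ (one_le_Einf w); norm_num
  · rw [Efin, if_neg h]
    apply sSup_le
    rintro z ⟨r, hr, rfl⟩
    exact le_Einf_of_containsPowInf (containsPowInf_of_pref hr)

lemma exists_pref_lt {w : ℕ → ℕ} {b : EReal} (h : b < Einf w) :
    ∃ k, pref w k ≠ [] ∧ b < Efin (pref w k) := by
  rw [Einf, lt_sSup_iff] at h
  obtain ⟨z, ⟨r, hr, rfl⟩, hz⟩ := h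
  obtain ⟨k, hk⟩ := exists_pref_of_containsPowInf hr
  have hne : pref w k ≠ [] := ne_nil_of_containsPowFin hk
  exact ⟨k, hne, lt_of_lt_of_le hz (le_Efin_of_containsPowFin hne hk)⟩

lemma nat_le_Einf_of_run {w : ℕ → ℕ} {i n a : ℕ} (hn : 0 < n)
    (h : ∀ j, j < n → w (i + j) = a) : ((n : ℝ) : EReal) ≤ Einf w := by
  have hocc : InfOccurs (List.replicate n a) w := by
    refine ⟨i, ?_⟩
    apply List.ext_getElem
    · simp
    · intro j h₁ h₂
      simp only [List.getElem_replicate, List.getElem_map, List.getElem_range]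
      exact (h j (by simpa using h₁)).symm
  have hc : ContainsPowInf w (n : ℚ) :=
    ⟨_, hocc, (n : ℚ), le_refl _, isPowerOfExp_replicate hn a⟩
  simpa using le_Einf_of_containsPowInf hc

lemma Einf_eq_top {w : ℕ → ℕ} {i a : ℕ} (h : ∀ j, i ≤ j → w j = a) : Einf w = ⊤ := by
  rw [EReal.eq_top_iff_forall_lt]
  intro y
  obtain ⟨n, hn⟩ := exists_nat_gt y
  have h1 : ((((n+1) : ℕ) : ℝ) : EReal) ≤ Einf w :=
    nat_le_Einf_of_run (Nat.succ_pos n) (fun j _ => h (i + j) (by omega))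
  refine lt_of_lt_of_le ?_ h1
  have : y < ((n+1 : ℕ) : ℝ) := by push_cast; linarith
  exact_mod_cast this

noncomputable section

lemma baseDigit_two (x : ℝ) (hx : 0 < x) (k : ℕ) :
    baseDigit 2 x k = (⌈x * 2 ^ (k + 1)⌉ - 2 * ⌈x * 2 ^ k⌉ + 1).toNat := by
  rw [baseDigit, if_neg (not_le.mpr hx)]
  norm_num

lemma dyadic_mul_pow (m : ℤ) {v j : ℕ} (hj : v ≤ j) :
    (m : ℝ) / 2 ^ v * 2 ^ j = ((m * 2 ^ (j - v) : ℤ) : ℝ) := by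
  have h : (2 : ℝ) ^ j = 2 ^ v * 2 ^ (j - v) := by
    rw [← pow_add]; congr 1; omega
  rw [h]
  push_cast
  field_simp

lemma ceil_add_small {m : ℤ} {ε : ℝ} (h0 : 0 < ε) (h1 : ε ≤ 1) : ⌈(m : ℝ) + ε⌉ = m + 1 := by
  rw [Int.ceil_eq_iff]
  push_cast
  constructor <;> linarith

lemma ceil_sub_small {m : ℤ} {ε : ℝ} (h0 : 0 < ε) (h1 : ε < 1) : ⌈(m : ℝ) - ε⌉ = m := by
  rw [Int.ceil_eq_iff]
  push_cast
  constructor <;> linarith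

lemma digit_dyadic {m : ℤ} {v : ℕ} (hm : 0 < m) {k : ℕ} (hk : v ≤ k) :
    baseDigit 2 ((m : ℝ) / 2 ^ v) k = 1 := by
  have hx : (0 : ℝ) < (m : ℝ) / 2 ^ v := by
    apply div_pos _ (by positivity)
    exact_mod_cast hm
  rw [baseDigit_two _ hx]
  rw [dyadic_mul_pow m (show v ≤ k + 1 by omega), dyadic_mul_pow m hk]
  rw [Int.ceil_intCast, Int.ceil_intCast]
  have h2 : m * 2 ^ (k + 1 - v) = 2 * (m * 2 ^ (k - v)) := by
    rw [show k + 1 - v = (k - v) + 1 by omega, pow_succ]; ring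
  rw [h2]
  omega

lemma Einf_ge_of_near_dyadic {x : ℝ} (hx : 0 < x) {m : ℤ} {k : ℕ}
    (hne : x ≠ (m : ℝ) / 2 ^ k) (hclose : |x - (m : ℝ) / 2 ^ k| < 1 / 4 ^ k) :
    ((k : ℝ) : EReal) ≤ Einf (baseDigit 2 x) := by
  rcases Nat.eq_zero_or_pos k with rfl | hk
  · refine le_trans ?_ (one_le_Einf _); norm_num
  have habs := abs_lt.mp hclose
  have hsmall : ∀ i : ℕ, i ≤ 2 * k → |x - (m : ℝ) / 2 ^ k| * 2 ^ i < 1 := by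
    intro i hi
    have h1 : |x - (m : ℝ) / 2 ^ k| * 2 ^ i < (1 / 4 ^ k) * 2 ^ i :=
      mul_lt_mul_of_pos_right hclose (by positivity)
    have h2 : (1 : ℝ) / 4 ^ k * 2 ^ i ≤ 1 := by
      rw [div_mul_eq_mul_div, one_mul, div_le_one (by positivity)]
      calc (2 : ℝ) ^ i ≤ 2 ^ (2 * k) := by
            apply pow_le_pow_right₀ (by norm_num) hi
      _ = 4 ^ k := by rw [pow_mul]; norm_num
    linarith
  rcases lt_or_gt_of_ne hne with hlt | hgt
  · -- x < m/2^k : digits are 1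
    have hceil : ∀ i : ℕ, k ≤ i → i ≤ 2 * k → ⌈x * 2 ^ i⌉ = m * 2 ^ (i - k) := by
      intro i h1 h2
      have hrw : x * 2 ^ i = ((m * 2 ^ (i - k) : ℤ) : ℝ) - ((m : ℝ) / 2 ^ k - x) * 2 ^ i := by
        rw [← dyadic_mul_pow m h1]; ring
      rw [hrw]
      apply ceil_sub_small
      · have : (0:ℝ) < (m : ℝ) / 2 ^ k - x := by linarith
        positivity
      · have := hsmall i h2
        rw [abs_of_neg (by linarith : x - (m : ℝ) / 2 ^ k < 0)] at this
        linarith [this]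
    have hdig : ∀ j, j < k → baseDigit 2 x (k + j) = 1 := by
      intro j hj
      rw [baseDigit_two x hx]
      rw [show k + j + 1 = k + j + 1 from rfl]
      rw [hceil (k + j + 1) (by omega) (by omega), hceil (k + j) (by omega) (by omega)]
      have h2 : m * 2 ^ (k + j + 1 - k) = 2 * (m * 2 ^ (k + j - k)) := by
        rw [show k + j + 1 - k = (k + j - k) + 1 by omega, pow_succ]; ring
      rw [h2]
      omega
    exact nat_le_Einf_of_run hk hdig
  · -- x > m/2^k : digits are 0
    have hceil : ∀ i : ℕ, k ≤ i → i ≤ 2 * k → ⌈x * 2 ^ i⌉ = m * 2 ^ (i - k) + 1 := by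
      intro i h1 h2
      have hrw : x * 2 ^ i = ((m * 2 ^ (i - k) : ℤ) : ℝ) + (x - (m : ℝ) / 2 ^ k) * 2 ^ i := by
        rw [← dyadic_mul_pow m h1]; ring
      rw [hrw]
      apply ceil_add_small
      · have : (0:ℝ) < x - (m : ℝ) / 2 ^ k := by linarith
        positivity
      · have := hsmall i h2
        rw [abs_of_pos (by linarith : (0:ℝ) < x - (m : ℝ) / 2 ^ k)] at this
        linarith [this]
    have hdig : ∀ j, j < k → baseDigit 2 x (k + j) = 0 := by
      intro j hj
      rw [baseDigit_two x hx]
      rw [hceil (k + j + 1) (by omega) (by omega), hceil (k + j) (by omega) (by omega)]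
      have h2 : m * 2 ^ (k + j + 1 - k) = 2 * (m * 2 ^ (k + j - k)) := by
        rw [show k + j + 1 - k = (k + j - k) + 1 by omega, pow_succ]; ring
      rw [h2]
      omega
    exact nat_le_Einf_of_run hk hdig

lemma ceil_congr_of_dyadic_interval {M : ℤ} {k i : ℕ} (hik : i ≤ k) {y z : ℝ}
    (hy1 : ((M : ℝ) - 1) / 2 ^ k < y) (hy2 : y < (M : ℝ) / 2 ^ k)
    (hz1 : ((M : ℝ) - 1) / 2 ^ k < z) (hz2 : z < (M : ℝ) / 2 ^ k) :
    ⌈y * 2 ^ i⌉ = ⌈z * 2 ^ i⌉ := by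
  have hsplit : (2 : ℝ) ^ k = 2 ^ i * 2 ^ (k - i) := by rw [← pow_add]; congr 1; omega
  have hppos : (0:ℝ) < 2 ^ i := by positivity
  have hqpos : (0:ℝ) < 2 ^ (k - i) := by positivity
  have key : ∀ u v : ℝ, ((M : ℝ) - 1) / 2 ^ k < u → u ≤ v → v < (M : ℝ) / 2 ^ k →
      v * 2 ^ i ≤ (⌈u * 2 ^ i⌉ : ℝ) := by
    intro u v hu huv hv
    by_contra hcon
    push_neg at hcon
    set C : ℤ := ⌈u * 2 ^ i⌉ with hC
    have h1 : u * 2 ^ i ≤ (C : ℝ) := Int.le_ceil _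
    have h2 : ((M : ℝ) - 1) < u * 2 ^ k := by
      rw [div_lt_iff₀ (by positivity)] at hu; linarith
    have h3 : v * 2 ^ k < (M : ℝ) := by
      rw [lt_div_iff₀ (by positivity)] at hv; linarith
    have eu : u * 2 ^ k = u * 2 ^ i * 2 ^ (k - i) := by rw [hsplit]; ring
    have ev : v * 2 ^ k = v * 2 ^ i * 2 ^ (k - i) := by rw [hsplit]; ring
    have hlow : ((M : ℝ) - 1) < (C : ℝ) * 2 ^ (k - i) := by
      have := mul_le_mul_of_nonneg_right h1 (le_of_lt hqpos)
      linarith [h2, eu]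
    have hhigh : (C : ℝ) * 2 ^ (k - i) < (M : ℝ) := by
      have := mul_lt_mul_of_pos_right hcon hqpos
      linarith [h3, ev]
    have hlow' : (M : ℤ) - 1 < C * 2 ^ (k - i) := by exact_mod_cast hlow
    have hhigh' : C * (2:ℤ) ^ (k - i) < M := by exact_mod_cast hhigh
    omega
  rcases le_total y z with h | h
  · refine le_antisymm (Int.ceil_le_ceil ?_) (Int.ceil_le.mpr (key y z hy1 h hz2))
    nlinarith
  · refine le_antisymm (Int.ceil_le.mpr (key z y hz1 h hy2)) (Int.ceil_le_ceil ?_)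
    nlinarith

lemma pref_locally_const {k : ℕ} {x₀ : ℝ} (hx : 0 < x₀) (hnd : ∀ m : ℤ, x₀ ≠ (m : ℝ) / 2 ^ k) :
    ∃ ε > 0, ∀ y : ℝ, |y - x₀| < ε →
      pref (baseDigit 2 y) k = pref (baseDigit 2 x₀) k := by
  set M : ℤ := ⌈x₀ * 2 ^ k⌉ with hM
  have hMpos : 0 < M := Int.ceil_pos.mpr (by positivity)
  have h1 : ((M : ℝ) - 1) / 2 ^ k < x₀ := by
    rw [div_lt_iff₀ (by positivity)]
    have := Int.ceil_lt_add_one (x₀ * 2 ^ k)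
    push_cast at this ⊢
    linarith
  have h2 : x₀ < (M : ℝ) / 2 ^ k := by
    have hle : x₀ ≤ (M : ℝ) / 2 ^ k := by
      rw [le_div_iff₀ (by positivity)]
      exact Int.le_ceil _
    exact lt_of_le_of_ne hle (hnd M)
  refine ⟨min (x₀ - ((M : ℝ) - 1) / 2 ^ k) ((M : ℝ) / 2 ^ k - x₀),
    lt_min (by linarith) (by linarith), ?_⟩
  intro y hy
  rw [abs_lt] at hy
  obtain ⟨hya, hyb⟩ := hy
  have hy1 : ((M : ℝ) - 1) / 2 ^ k < y := by
    have := min_le_left (x₀ - ((M : ℝ) - 1) / 2 ^ k) ((M : ℝ) / 2 ^ k - x₀)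
    linarith
  have hy2 : y < (M : ℝ) / 2 ^ k := by
    have := min_le_right (x₀ - ((M : ℝ) - 1) / 2 ^ k) ((M : ℝ) / 2 ^ k - x₀)
    linarith
  have hypos : 0 < y := by
    have hM1 : (1 : ℝ) ≤ (M : ℝ) := by exact_mod_cast hMpos
    have : (0:ℝ) ≤ ((M : ℝ) - 1) / 2 ^ k := by
      apply div_nonneg (by linarith) (by positivity)
    linarith
  apply List.map_congr_left
  intro j hj
  rw [List.mem_range] at hj
  rw [baseDigit_two _ hypos, baseDigit_two _ hx]
  rw [ceil_congr_of_dyadic_interval (show j + 1 ≤ k by omega) hy1 hy2 h1 h2,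
    ceil_congr_of_dyadic_interval (show j ≤ k by omega) hy1 hy2 h1 h2]

def Dy (k : ℕ) : Set ℝ := {y : ℝ | ∃ m : ℤ, y = (m : ℝ) / 2 ^ k}

lemma Dy_nonempty (k : ℕ) : (Dy k).Nonempty := ⟨0, 0, by simp⟩

lemma Dy_closed (k : ℕ) : IsClosed (Dy k) := by
  have h : Dy k = (fun y : ℝ => y * 2 ^ k) ⁻¹' (Set.range ((↑) : ℤ → ℝ)) := by
    ext y
    simp only [Dy, Set.mem_setOf_eq, Set.mem_preimage, Set.mem_range]
    constructor
    · rintro ⟨m, rfl⟩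
      exact ⟨m, by field_simp⟩
    · rintro ⟨m, hm⟩
      refine ⟨m, ?_⟩
      field_simp
      linarith [hm]
  rw [h]
  exact Int.isClosedEmbedding_coe_real.isClosed_range.preimage (by continuity)

noncomputable def gq (k : ℕ) (x : ℝ) : ℝ := 1 / (Efin (pref (baseDigit 2 x) k)).toReal

noncomputable def fap (k : ℕ) (x : ℝ) : ℝ :=
  gq k x * min 1 (4 ^ k * Metric.infDist x (Dy k))

lemma pref_ne_nil {w : ℕ → ℕ} {k : ℕ} (hk : 0 < k) : pref w k ≠ [] := by
  intro h
  have := congrArg List.length h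
  simp at this
  omega

lemma Efin_pref_toReal_bounds {w : ℕ → ℕ} {k : ℕ} (hk : 0 < k) :
    1 ≤ (Efin (pref w k)).toReal ∧ (Efin (pref w k)).toReal ≤ k := by
  have h1 := one_le_Efin (pref_ne_nil (w := w) hk)
  have h2 := Efin_le_length (pref w k)
  rw [pref_length] at h2
  have hnb : Efin (pref w k) ≠ ⊥ := by
    intro h
    rw [h] at h1
    exact EReal.coe_ne_bot 1 (le_bot_iff.mp h1)
  have hnt : Efin (pref w k) ≠ ⊤ := by
    intro h
    rw [h] at h2
    exact EReal.coe_ne_top _ (top_le_iff.mp h2)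
  constructor
  · have := EReal.toReal_le_toReal h1 (EReal.coe_ne_bot 1) hnt
    simpa using this
  · have := EReal.toReal_le_toReal h2 hnb (EReal.coe_ne_top _)
    rw [EReal.toReal_coe] at this; exact this

lemma gq_nonneg (k : ℕ) (x : ℝ) : 0 ≤ gq k x := by
  rcases Nat.eq_zero_or_pos k with rfl | hk
  · simp [gq, Efin]
  · have := (Efin_pref_toReal_bounds (w := baseDigit 2 x) hk).1
    rw [gq]
    positivity

lemma gq_le_one {k : ℕ} (hk : 0 < k) (x : ℝ) : gq k x ≤ 1 := by
  have h := (Efin_pref_toReal_bounds (w := baseDigit 2 x) hk).1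
  rw [gq, div_le_one (by linarith)]
  linarith

lemma continuous_min_part (k : ℕ) :
    Continuous (fun x : ℝ => min 1 (4 ^ k * Metric.infDist x (Dy k))) :=
  continuous_const.min (continuous_const.mul (Metric.continuous_infDist_pt _))

lemma min_part_nonneg (k : ℕ) (x : ℝ) : 0 ≤ min 1 (4 ^ k * Metric.infDist x (Dy k)) :=
  le_min zero_le_one (mul_nonneg (by positivity) Metric.infDist_nonneg)

lemma fap_nonneg (k : ℕ) (x : ℝ) : 0 ≤ fap k x :=
  mul_nonneg (gq_nonneg k x) (min_part_nonneg k x)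

lemma fap_le_gq (k : ℕ) (x : ℝ) : fap k x ≤ gq k x :=
  mul_le_of_le_one_right (gq_nonneg k x) (min_le_left _ _)

lemma fap_continuousAt_of_mem {k : ℕ} (hk : 0 < k) {t : ℝ} (ht : t ∈ Dy k) :
    ContinuousAt (fap k) t := by
  have hft : fap k t = 0 := by
    simp [fap, Metric.infDist_zero_of_mem ht]
  rw [ContinuousAt, hft]
  have hup : Filter.Tendsto (fun y : ℝ => 4 ^ k * dist y t) (nhds t) (nhds 0) := by
    have : Filter.Tendsto (fun y : ℝ => 4 ^ k * dist y t) (nhds t) (nhds (4 ^ k * dist t t)) :=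
      ((continuous_const.mul (continuous_id.dist continuous_const)).tendsto t)
    simpa using this
  apply squeeze_zero (fun y => fap_nonneg k y) _ hup
  intro y
  calc fap k y ≤ 1 * min 1 (4 ^ k * Metric.infDist y (Dy k)) :=
        mul_le_mul_of_nonneg_right (gq_le_one hk y) (min_part_nonneg k y)
  _ ≤ 4 ^ k * Metric.infDist y (Dy k) := by rw [one_mul]; exact min_le_right _ _
  _ ≤ 4 ^ k * dist y t := by
      apply mul_le_mul_of_nonneg_left (Metric.infDist_le_dist_of_mem ht) (by positivity)

lemma fap_continuousAt_of_not_mem {k : ℕ} {x₀ : ℝ} (hx : 0 < x₀)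
    (hnm : x₀ ∉ Dy k) : ContinuousAt (fap k) x₀ := by
  have hnd : ∀ m : ℤ, x₀ ≠ (m : ℝ) / 2 ^ k := fun m hm => hnm ⟨m, hm⟩
  obtain ⟨ε, hε, hloc⟩ := pref_locally_const hx hnd
  have hev : (fun y => gq k x₀ * min 1 (4 ^ k * Metric.infDist y (Dy k))) =ᶠ[nhds x₀] fap k := by
    filter_upwards [Metric.ball_mem_nhds x₀ hε] with y hy
    have h1 : pref (baseDigit 2 y) k = pref (baseDigit 2 x₀) k :=
      hloc y (by rwa [Metric.mem_ball, Real.dist_eq] at hy)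
    rw [fap, gq, gq, h1]
  exact ((continuous_const.mul (continuous_min_part k)).continuousAt).congr hev

lemma Efin_pref_ne_top {w : ℕ → ℕ} (k : ℕ) : Efin (pref w k) ≠ ⊤ := by
  intro h
  have h2 := Efin_le_length (pref w k)
  rw [pref_length, h] at h2
  exact EReal.coe_ne_top _ (top_le_iff.mp h2)

lemma Efin_pref_ne_bot {w : ℕ → ℕ} {k : ℕ} (hk : 0 < k) : Efin (pref w k) ≠ ⊥ := by
  intro h
  have h1 := one_le_Efin (pref_ne_nil (w := w) hk)
  rw [h] at h1
  exact EReal.coe_ne_bot 1 (le_bot_iff.mp h1)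

lemma Einf_ne_bot (w : ℕ → ℕ) : Einf w ≠ ⊥ := fun h =>
  EReal.coe_ne_bot 1 (le_bot_iff.mp (h ▸ one_le_Einf w))

lemma gq_tendsto_zero {x : ℝ} (htop : Einf (baseDigit 2 x) = ⊤) :
    Filter.Tendsto (fun k => gq k x) Filter.atTop (nhds 0) := by
  rw [Metric.tendsto_atTop]
  intro ε hε
  obtain ⟨n, hn⟩ := exists_nat_gt (1 / ε)
  set w := baseDigit 2 x with hw
  have hb : (((n + 1 : ℕ) : ℝ) : EReal) < Einf w := by
    rw [htop]; exact EReal.coe_lt_top _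
  obtain ⟨k₀, hk₀ne, hk₀⟩ := exists_pref_lt hb
  refine ⟨max k₀ 1, fun k hk => ?_⟩
  have hk1 : 0 < k := by have := le_trans (le_max_right _ _) hk; omega
  have hm : Efin (pref w k₀) ≤ Efin (pref w k) :=
    Efin_mono (pref_prefix w (le_trans (le_max_left _ _) hk)).isInfix
  have hlt : (((n + 1 : ℕ) : ℝ) : EReal) < Efin (pref w k) := lt_of_lt_of_le hk₀ hm
  have hge : ((n + 1 : ℕ) : ℝ) ≤ (Efin (pref w k)).toReal := by
    have := EReal.toReal_le_toReal hlt.le (EReal.coe_ne_bot _) (Efin_pref_ne_top k)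
    rw [EReal.toReal_coe] at this; exact this
  have ht1 : (0 : ℝ) < ((n + 1 : ℕ) : ℝ) := by positivity
  have hgq : gq k x ≤ 1 / ((n + 1 : ℕ) : ℝ) := by
    rw [gq, ← hw]
    exact one_div_le_one_div_of_le ht1 hge
  have hlt2 : 1 / ((n + 1 : ℕ) : ℝ) < ε := by
    rw [div_lt_iff₀ ht1]
    have h5 : 1 / ε < (n : ℝ) + 1 := by linarith
    calc (1 : ℝ) = ε * (1 / ε) := by field_simp
    _ < ε * ((n : ℝ) + 1) := by exact mul_lt_mul_of_pos_left h5 hε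
    _ = ε * ((n + 1 : ℕ) : ℝ) := by push_cast; ring
  rw [Real.dist_eq, sub_zero, abs_of_nonneg (gq_nonneg k x)]
  linarith

lemma tendsto_toReal_Efin {x : ℝ} (htop : Einf (baseDigit 2 x) ≠ ⊤) :
    Filter.Tendsto (fun k => (Efin (pref (baseDigit 2 x) k)).toReal) Filter.atTop
      (nhds (Einf (baseDigit 2 x)).toReal) := by
  set w := baseDigit 2 x with hw
  set E := Einf w with hE
  set c := E.toReal with hc
  rw [Metric.tendsto_atTop]
  intro ε hε
  have hblt : ((c - ε / 2 : ℝ) : EReal) < E := by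
    conv_rhs => rw [← EReal.coe_toReal htop (Einf_ne_bot w)]
    exact_mod_cast (show c - ε / 2 < c by linarith)
  obtain ⟨k₀, -, hk₀⟩ := exists_pref_lt hblt
  refine ⟨max k₀ 1, fun k hk => ?_⟩
  have hk1 : 0 < k := by have := le_trans (le_max_right _ _) hk; omega
  have hm : Efin (pref w k₀) ≤ Efin (pref w k) :=
    Efin_mono (pref_prefix w (le_trans (le_max_left _ _) hk)).isInfix
  have hup : Efin (pref w k) ≤ E := Efin_pref_le_Einf w k
  have hlow : c - ε / 2 ≤ (Efin (pref w k)).toReal := by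
    have hlt : ((c - ε / 2 : ℝ) : EReal) ≤ Efin (pref w k) := (lt_of_lt_of_le hk₀ hm).le
    have := EReal.toReal_le_toReal hlt (EReal.coe_ne_bot _) (Efin_pref_ne_top k)
    rwa [EReal.toReal_coe] at this
  have hhigh : (Efin (pref w k)).toReal ≤ c :=
    EReal.toReal_le_toReal hup (Efin_pref_ne_bot hk1) htop
  rw [Real.dist_eq]
  have : |(Efin (pref w k)).toReal - c| ≤ ε / 2 := abs_le.mpr ⟨by linarith, by linarith⟩
  linarith

lemma dyadic_mem_Dy {m : ℤ} {v k : ℕ} (h : v ≤ k) : (m : ℝ) / 2 ^ v ∈ Dy k := by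
  refine ⟨m * 2 ^ (k - v), ?_⟩
  rw [eq_div_iff (by positivity : (2 : ℝ) ^ k ≠ 0)]
  exact dyadic_mul_pow m h

end

end Stmt4
theorem stmt_4 :
    ∃ f : ℕ → ℝ → ℝ, (∀ k, ContinuousOn (f k) (Set.Icc (0 : ℝ) 1)) ∧
      ∀ x ∈ Set.Icc (0 : ℝ) 1,
        Filter.Tendsto (fun k => f k x) Filter.atTop (nhds (kappa2 x)) := by
  classical
  refine ⟨Stmt4.fap, ?_, ?_⟩
  · intro k x hx
    rcases Nat.eq_zero_or_pos k with rfl | hk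
    · have h0 : Stmt4.fap 0 = fun _ : ℝ => (0 : ℝ) := by
        funext y
        simp [Stmt4.fap, Stmt4.gq, Efin]
      rw [h0]
      exact continuousWithinAt_const
    · by_cases h : x ∈ Stmt4.Dy k
      · exact (Stmt4.fap_continuousAt_of_mem hk h).continuousWithinAt
      · have hx0 : 0 < x := lt_of_le_of_ne hx.1 (fun h0 => h ⟨0, by rw [← h0]; simp⟩)
        exact (Stmt4.fap_continuousAt_of_not_mem hx0 h).continuousWithinAt
  · intro x hx
    by_cases hdy : ∃ v : ℕ, ∃ m : ℤ, x = (m : ℝ) / 2 ^ v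
    · obtain ⟨v, m, hxe⟩ := hdy
      have hk0 : kappa2 x = 0 := by
        rcases eq_or_lt_of_le hx.1 with h0 | h0
        · have htop : Einf (baseDigit 2 x) = ⊤ :=
            Stmt4.Einf_eq_top (i := 0) (a := 0)
              (fun j _ => by rw [baseDigit, if_pos (le_of_eq h0.symm)])
          simp [kappa2, kappaBase, htop]
        · have hm : 0 < m := by
            have h2 : (0 : ℝ) < (m : ℝ) / 2 ^ v := hxe ▸ h0
            have h3 : (0 : ℝ) < (m : ℝ) := by
              by_contra hc
              push_neg at hc
              have : (m : ℝ) / 2 ^ v ≤ 0 :=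
                div_nonpos_of_nonpos_of_nonneg hc (by positivity)
              linarith
            exact_mod_cast h3
          have htop : Einf (baseDigit 2 x) = ⊤ :=
            Stmt4.Einf_eq_top (i := v) (a := 1)
              (fun j hj => by rw [hxe]; exact Stmt4.digit_dyadic hm hj)
          simp [kappa2, kappaBase, htop]
      rw [hk0]
      have hev : (fun _ : ℕ => (0 : ℝ)) =ᶠ[Filter.atTop] fun k => Stmt4.fap k x := by
        rw [Filter.EventuallyEq, Filter.eventually_atTop]
        refine ⟨v, fun k hk => ?_⟩
        have hmem : x ∈ Stmt4.Dy k := hxe ▸ Stmt4.dyadic_mem_Dy hk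
        simp [Stmt4.fap, Metric.infDist_zero_of_mem hmem]
      exact Filter.Tendsto.congr' hev tendsto_const_nhds
    · push_neg at hdy
      have hx0 : 0 < x := by
        rcases eq_or_lt_of_le hx.1 with h0 | h0
        · exact absurd (by rw [← h0]; simp : x = ((0 : ℤ) : ℝ) / 2 ^ (0 : ℕ)) (hdy 0 0)
        · exact h0
      by_cases htop : Einf (baseDigit 2 x) = ⊤
      · have hk0 : kappa2 x = 0 := by simp [kappa2, kappaBase, htop]
        rw [hk0]
        exact squeeze_zero (fun k => Stmt4.fap_nonneg k x) (fun k => Stmt4.fap_le_gq k x)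
          (Stmt4.gq_tendsto_zero htop)
      · have hc1 : 1 ≤ (Einf (baseDigit 2 x)).toReal := by
          have := EReal.toReal_le_toReal (Stmt4.one_le_Einf (baseDigit 2 x))
            (EReal.coe_ne_bot 1) htop
          simpa using this
        have hgq : Filter.Tendsto (fun k => Stmt4.gq k x) Filter.atTop
            (nhds (1 / (Einf (baseDigit 2 x)).toReal)) := by
          exact Filter.Tendsto.div tendsto_const_nhds
            (Stmt4.tendsto_toReal_Efin htop) (by linarith)
        have hev : (fun k => Stmt4.gq k x) =ᶠ[Filter.atTop] fun k => Stmt4.fap k x := by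
          rw [Filter.EventuallyEq, Filter.eventually_atTop]
          set c := (Einf (baseDigit 2 x)).toReal with hcdef
          refine ⟨⌈c⌉.toNat + 1, fun k hk => ?_⟩
          have hkc : c < (k : ℝ) := by
            have h1 : c ≤ (⌈c⌉ : ℝ) := Int.le_ceil c
            have h2 : (⌈c⌉ : ℝ) ≤ (⌈c⌉.toNat : ℝ) := by
              exact_mod_cast Int.self_le_toNat _
            have h3 : (⌈c⌉.toNat : ℝ) < (k : ℝ) := by exact_mod_cast hk
            linarith
          have hmin : (1 : ℝ) ≤ 4 ^ k * Metric.infDist x (Stmt4.Dy k) := by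
            by_contra hcon
            push_neg at hcon
            have hlt : Metric.infDist x (Stmt4.Dy k) < 1 / 4 ^ k := by
              rw [lt_div_iff₀ (by positivity)]
              linarith [hcon]
            obtain ⟨y, hy, hdist⟩ := (Metric.infDist_lt_iff (Stmt4.Dy_nonempty k)).mp hlt
            obtain ⟨mm, rfl⟩ := hy
            have hEk := Stmt4.Einf_ge_of_near_dyadic hx0 (hdy k mm)
              (by rwa [Real.dist_eq] at hdist)
            have hkc2 : (k : ℝ) ≤ c := by
              have := EReal.toReal_le_toReal hEk (EReal.coe_ne_bot _) htop
              rw [EReal.toReal_coe] at this; exact this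
            linarith
          rw [Stmt4.fap, min_eq_left hmin, mul_one]
        have hkap : kappa2 x = 1 / (Einf (baseDigit 2 x)).toReal := rfl
        rw [hkap]
        exact Filter.Tendsto.congr' hev hgq
end

section
/- The set of points of continuity of κ₂ coincides exactly with its zero set C₂ := { x ∈ [0,1] : κ₂(x) = 0 }; that is, κ₂ is continuous at x if and only if κ₂(x) = 0. -/
lemma ereal_cases (a : EReal) : a = ⊥ ∨ a = ⊤ ∨ ∃ t : ℝ, a = (t : EReal) := by
  rcases a with _ | _ | t
  · exact Or.inl rfl
  · exact Or.inr (Or.inl rfl)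
  · exact Or.inr (Or.inr ⟨t, rfl⟩)


lemma ereal_one_ne_bot : (1 : EReal) ≠ ⊥ := by
  have : ((1:ℝ) : EReal) = (1 : EReal) := by norm_num
  rw [← this]
  exact EReal.coe_ne_bot 1

lemma run_contains {α : Type*} (w : ℕ → α) (c : α) (i n : ℕ) (hn : 0 < n)
    (h : ∀ k < n, w (i + k) = c) : ContainsPowInf w (n : ℚ) := by
  refine ⟨List.replicate n c, ⟨i, ?_⟩, (n : ℚ), le_refl _, n, 1, ?_, by norm_num⟩
  · symm
    rw [List.eq_replicate_iff]
    constructor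
    · simp
    · intro b hb
      simp only [List.mem_map, List.mem_range, List.length_replicate] at hb
      obtain ⟨k, hk, hbk⟩ := hb
      rw [← hbk]; exact h k hk
  · refine ⟨hn, one_pos, by simp, [c], [], n, by simp, hn, List.nil_prefix, by simp, ?_⟩
    rw [List.append_nil]
    induction n with
    | zero => simp
    | succ m ih => simp [List.replicate_succ, ih]

lemma le_Einf {α : Type*} (w : ℕ → α) (r : ℚ) (h : ContainsPowInf w r) :
    ((r : ℝ) : EReal) ≤ Einf w := le_sSup ⟨r, h, rfl⟩

lemma Einf_top_of_runs {α : Type*} (w : ℕ → α)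
    (h : ∀ n : ℕ, ContainsPowInf w (n : ℚ)) : Einf w = ⊤ := by
  rw [EReal.eq_top_iff_forall_lt]
  intro y
  obtain ⟨n, hn⟩ := exists_nat_gt y
  have h2 := le_Einf w n (h n)
  refine lt_of_lt_of_le ?_ h2
  exact_mod_cast EReal.coe_lt_coe_iff.mpr (by exact_mod_cast hn)

lemma one_le_Einf {α : Type*} (w : ℕ → α) : (1 : EReal) ≤ Einf w := by
  have := le_Einf w 1 (by simpa using run_contains w (w 0) 0 1 one_pos (by
    intro k hk; interval_cases k; simp))
  simpa using this

lemma kappa_le (w : ℕ → ℕ) (N : ℕ) (hN : 0 < N) (r : ℚ) (hr : (N : ℚ) ≤ r)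
    (h : ContainsPowInf w r) : 1 / (Einf w).toReal ≤ 1 / (N : ℝ) := by
  have h1 : ((N : ℝ) : EReal) ≤ Einf w := by
    refine le_trans ?_ (le_Einf w r h)
    exact EReal.coe_le_coe_iff.mpr (by exact_mod_cast hr)
  rcases ereal_cases (Einf w) with hE | hE | ⟨t, hE⟩
  · rw [hE] at h1; exact absurd h1 (by rw [le_bot_iff]; exact EReal.coe_ne_bot _)
  · rw [hE]; simp
  · rw [hE] at h1 ⊢
    have ht : (N : ℝ) ≤ t := by exact_mod_cast h1
    simp only [EReal.toReal_coe]
    have hNpos : (0:ℝ) < N := by exact_mod_cast hN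
    exact one_div_le_one_div_of_le hNpos ht

lemma Einf_toReal_nonneg {α : Type*} (w : ℕ → α) : 0 ≤ (Einf w).toReal := by
  rcases ereal_cases (Einf w) with hE | hE | ⟨t, hE⟩
  · have := one_le_Einf w; rw [hE] at this; exact absurd (le_bot_iff.mp this) ereal_one_ne_bot
  · simp [hE]
  · have h1 := one_le_Einf w; rw [hE] at h1
    have : (1:ℝ) ≤ t := by exact_mod_cast h1
    rw [hE]; simp only [EReal.toReal_coe]; linarith

lemma kappa_nonneg (y : ℝ) : 0 ≤ kappa2 y := by
  unfold kappa2 kappaBase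
  exact one_div_nonneg.mpr (Einf_toReal_nonneg _)

lemma Einf_top_of_kappa_zero (x : ℝ) (h : kappa2 x = 0) : Einf (baseDigit 2 x) = ⊤ := by
  unfold kappa2 kappaBase at h
  rcases ereal_cases (Einf (baseDigit 2 x)) with hE | hE | ⟨t, hE⟩
  · have := one_le_Einf (baseDigit 2 x); rw [hE] at this; exact absurd (le_bot_iff.mp this) ereal_one_ne_bot
  · exact hE
  · have h1 := one_le_Einf (baseDigit 2 x); rw [hE] at h1
    have ht : (1:ℝ) ≤ t := by exact_mod_cast h1
    rw [hE] at h; simp only [EReal.toReal_coe] at h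
    rw [div_eq_zero_iff] at h
    rcases h with h | h
    · norm_num at h
    · linarith

lemma Einf_top_of_long_runs {α : Type*} (w : ℕ → α)
    (h : ∀ n : ℕ, ∃ c i, ∀ k < n + 1, w (i + k) = c) : Einf w = ⊤ := by
  rw [EReal.eq_top_iff_forall_lt]
  intro y
  obtain ⟨n, hn⟩ := exists_nat_gt y
  obtain ⟨c, i, hc⟩ := h n
  have h2 := le_Einf w (n+1 : ℕ) (run_contains w c i (n+1) (Nat.succ_pos n) hc)
  refine lt_of_lt_of_le ?_ h2
  have : y < ((n+1 : ℕ) : ℝ) := by push_cast; linarith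
  exact_mod_cast EReal.coe_lt_coe_iff.mpr this

lemma digit_one (a : ℤ) (ha : 0 < a) (j d : ℕ) :
    baseDigit 2 ((a : ℝ) / 2 ^ j) (j + d) = 1 := by
  have hx : ¬((a : ℝ) / 2 ^ j ≤ 0) := by
    push_neg
    apply div_pos (by exact_mod_cast ha) (by positivity)
  unfold baseDigit
  rw [if_neg hx]
  have h2j : (2 : ℝ) ^ j ≠ 0 := by positivity
  have h1 : (a : ℝ) / 2 ^ j * (2 : ℕ) ^ (j + d) = ((a * 2 ^ d : ℤ) : ℝ) := by
    push_cast
    field_simp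
    ring
  have h2 : (a : ℝ) / 2 ^ j * (2 : ℕ) ^ (j + d + 1) = ((a * 2 ^ (d + 1) : ℤ) : ℝ) := by
    push_cast
    field_simp
    ring
  rw [h1, h2, Int.ceil_intCast, Int.ceil_intCast]
  have h3 : ((2:ℕ):ℤ) = 2 := rfl
  have : a * 2 ^ (d + 1) - 2 * (a * 2 ^ d) + ((2 : ℤ) - 1) = 1 := by ring
  rw [h3, this]
  rfl

lemma kappa_dyadic (a : ℤ) (ha : 0 ≤ a) (j : ℕ) : kappa2 ((a : ℝ) / 2 ^ j) = 0 := by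
  have htop : Einf (baseDigit 2 ((a : ℝ) / 2 ^ j)) = ⊤ := by
    rcases eq_or_lt_of_le ha with h0 | hpos
    · apply Einf_top_of_long_runs _ (fun n => ⟨0, 0, fun k _ => ?_⟩)
      unfold baseDigit
      rw [if_pos]
      rw [← h0]
      norm_num
    · apply Einf_top_of_long_runs _ (fun n => ⟨1, j, fun k _ => ?_⟩)
      exact digit_one a hpos j k
  unfold kappa2 kappaBase
  rw [htop]
  simp

lemma forward_dir (x : ℝ) (hx : x ∈ Set.Icc (0 : ℝ) 1)
    (h : ContinuousWithinAt kappa2 (Set.Icc (0 : ℝ) 1) x) : kappa2 x = 0 := by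
  obtain ⟨hx0, hx1⟩ := hx
  set d : ℕ → ℝ := fun n => (⌊x * 2 ^ n⌋ : ℝ) / 2 ^ n with hd
  have hmem : ∀ n, d n ∈ Set.Icc (0 : ℝ) 1 := by
    intro n
    constructor
    · apply div_nonneg _ (by positivity)
      exact_mod_cast Int.floor_nonneg.mpr (by positivity)
    · rw [div_le_one (by positivity)]
      calc ((⌊x * 2 ^ n⌋ : ℝ)) ≤ x * 2 ^ n := Int.floor_le _
        _ ≤ 1 * 2 ^ n := by nlinarith [pow_pos (by norm_num : (0:ℝ) < 2) n]
        _ = 2 ^ n := one_mul _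
  have hdist : ∀ n, |d n - x| ≤ (1 / 2 : ℝ) ^ n := by
    intro n
    have h2n : (0:ℝ) < 2 ^ n := by positivity
    rw [abs_le]
    constructor
    · have := Int.lt_floor_add_one (x * 2 ^ n)
      rw [hd]
      simp only
      rw [div_sub' (ne_of_gt h2n), le_div_iff₀ h2n]
      have hp : ((1/2:ℝ)) ^ n * 2 ^ n = 1 := by
        rw [← mul_pow]; norm_num
      nlinarith [this]
    · have := Int.floor_le (x * 2 ^ n)
      have hle : d n - x ≤ 0 := by
        rw [hd]; simp only
        rw [sub_nonpos, div_le_iff₀ h2n]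
        linarith
      have : (0:ℝ) ≤ (1/2:ℝ)^n := by positivity
      linarith
  have htend : Filter.Tendsto d Filter.atTop (nhds x) := by
    have h0 : Filter.Tendsto (fun n => d n - x) Filter.atTop (nhds 0) := by
      apply squeeze_zero_norm hdist
      exact tendsto_pow_atTop_nhds_zero_of_lt_one (by norm_num) (by norm_num)
    have := h0.add_const x
    simpa using this
  have htendW : Filter.Tendsto d Filter.atTop (nhdsWithin x (Set.Icc (0:ℝ) 1)) := by
    rw [tendsto_nhdsWithin_iff]
    exact ⟨htend, Filter.Eventually.of_forall hmem⟩
  have hcomp : Filter.Tendsto (kappa2 ∘ d) Filter.atTop (nhds (kappa2 x)) := h.tendsto.comp htendW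
  have hzero : (kappa2 ∘ d) = fun _ => (0:ℝ) := by
    funext n
    simp only [Function.comp]
    exact kappa_dyadic ⌊x * 2 ^ n⌋ (Int.floor_nonneg.mpr (by positivity)) n
  rw [hzero] at hcomp
  exact tendsto_nhds_unique hcomp tendsto_const_nhds |>.symm ▸ rfl

lemma ceil_agree_left (x : ℝ) (hx : 0 < x) (M : ℕ) :
    ∃ δ > 0, ∀ y : ℝ, x - δ < y → y ≤ x →
      0 < y ∧ ∀ j ≤ M, ⌈y * 2 ^ j⌉ = ⌈x * 2 ^ j⌉ := by
  set f : ℕ → ℝ := fun j => (x * 2 ^ j - (⌈x * 2 ^ j⌉ : ℝ) + 1) / 2 ^ j with hf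
  have hfpos : ∀ j, 0 < f j := fun j =>
    div_pos (by linarith [Int.ceil_lt_add_one (x * 2 ^ j)]) (by positivity)
  refine ⟨(Finset.range (M + 1)).inf' ⟨0, by simp⟩ f,
    (Finset.lt_inf'_iff _).mpr (fun i _ => hfpos i), fun y h1 h2 => ?_⟩
  set δ := (Finset.range (M + 1)).inf' ⟨0, by simp⟩ f with hδ
  have hδle : ∀ j ≤ M, δ ≤ f j := fun j hj =>
    Finset.inf'_le _ (Finset.mem_range.mpr (Nat.lt_succ_of_le hj))
  have hy0 : 0 < y := by
    have hd0 := hδle 0 (Nat.zero_le M)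
    have hc : (1 : ℝ) ≤ (⌈x⌉ : ℝ) := by
      exact_mod_cast Int.ceil_pos.mpr hx
    have hf0 : f 0 = x - (⌈x⌉ : ℝ) + 1 := by simp [hf]
    rw [hf0] at hd0
    linarith
  refine ⟨hy0, fun j hj => ?_⟩
  have h2j : (0:ℝ) < 2 ^ j := by positivity
  have hle : ⌈y * 2 ^ j⌉ ≤ ⌈x * 2 ^ j⌉ :=
    Int.ceil_le_ceil (by nlinarith)
  have hge : ⌈x * 2 ^ j⌉ - 1 < ⌈y * 2 ^ j⌉ := by
    rw [Int.lt_ceil]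
    have hdj := hδle j hj
    have : δ * 2 ^ j ≤ x * 2 ^ j - (⌈x * 2 ^ j⌉ : ℝ) + 1 := by
      rw [hf] at hdj
      calc δ * 2 ^ j ≤ f j * 2 ^ j := by nlinarith [hfpos j]
        _ = x * 2 ^ j - (⌈x * 2 ^ j⌉ : ℝ) + 1 := by
          simp only [hf]; exact div_mul_cancel₀ _ (ne_of_gt h2j)
    push_cast
    nlinarith
  omega

lemma ceil_agree_right (x : ℝ) (M : ℕ)
    (hnd : ∀ j ≤ M, ∀ a : ℤ, x * 2 ^ j ≠ (a : ℝ)) :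
    ∃ δ > 0, ∀ y : ℝ, x ≤ y → y < x + δ →
      ∀ j ≤ M, ⌈y * 2 ^ j⌉ = ⌈x * 2 ^ j⌉ := by
  set f : ℕ → ℝ := fun j => ((⌈x * 2 ^ j⌉ : ℝ) - x * 2 ^ j) / 2 ^ j with hf
  have hfpos : ∀ j ≤ M, 0 < f j := by
    intro j hj
    apply div_pos _ (by positivity)
    have hle := Int.le_ceil (x * 2 ^ j)
    have hne := hnd j hj ⌈x * 2 ^ j⌉
    rcases lt_or_eq_of_le hle with h | h
    · linarith
    · exact absurd h hne
  refine ⟨(Finset.range (M + 1)).inf' ⟨0, by simp⟩ f,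
    (Finset.lt_inf'_iff _).mpr (fun i hi => hfpos i (by
      simp only [Finset.mem_range] at hi; omega)), fun y h1 h2 j hj => ?_⟩
  set δ := (Finset.range (M + 1)).inf' ⟨0, by simp⟩ f with hδ
  have hδle : δ ≤ f j := Finset.inf'_le _ (Finset.mem_range.mpr (Nat.lt_succ_of_le hj))
  have h2j : (0:ℝ) < 2 ^ j := by positivity
  have hge : ⌈x * 2 ^ j⌉ ≤ ⌈y * 2 ^ j⌉ := Int.ceil_le_ceil (by nlinarith)
  have hle : ⌈y * 2 ^ j⌉ ≤ ⌈x * 2 ^ j⌉ := by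
    rw [Int.ceil_le]
    have : δ * 2 ^ j ≤ (⌈x * 2 ^ j⌉ : ℝ) - x * 2 ^ j := by
      calc δ * 2 ^ j ≤ f j * 2 ^ j := by nlinarith [hfpos j hj, hδle]
        _ = (⌈x * 2 ^ j⌉ : ℝ) - x * 2 ^ j := by simp only [hf]; exact div_mul_cancel₀ _ (ne_of_gt h2j)
    nlinarith
  omega

lemma ceil_dyadic_right (a : ℤ) (j : ℕ) (y : ℝ) (m t : ℕ) (hjt : j ≤ t) (htm : t ≤ m)
    (h1 : (a : ℝ) / 2 ^ j < y) (h2 : y < (a : ℝ) / 2 ^ j + 1 / 2 ^ m) :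
    ⌈y * 2 ^ t⌉ = a * 2 ^ (t - j) + 1 := by
  have h2j : (0:ℝ) < 2 ^ j := by positivity
  have h2t : (0:ℝ) < 2 ^ t := by positivity
  have h2m : (0:ℝ) < 2 ^ m := by positivity
  have e1 : ((a * 2 ^ (t - j) : ℤ) : ℝ) = (a : ℝ) / 2 ^ j * 2 ^ t := by
    push_cast
    rw [div_mul_eq_mul_div, eq_div_iff (ne_of_gt h2j), mul_assoc, ← pow_add]
    congr 2
    omega
  rw [Int.ceil_eq_iff]
  have hmul : (1:ℝ) / 2 ^ m * 2 ^ t ≤ 1 := by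
    rw [div_mul_eq_mul_div, one_mul, div_le_one h2m]
    exact pow_le_pow_right₀ (by norm_num) htm
  push_cast at e1 ⊢
  constructor
  · rw [add_sub_cancel_right, e1]
    nlinarith
  · rw [e1]
    nlinarith

lemma digit_zero_right (a : ℤ) (ha : 0 ≤ a) (j : ℕ) (y : ℝ) (m k : ℕ)
    (hjk : j ≤ k) (hkm : k + 1 ≤ m)
    (h1 : (a : ℝ) / 2 ^ j < y) (h2 : y < (a : ℝ) / 2 ^ j + 1 / 2 ^ m) :
    baseDigit 2 y k = 0 := by
  have hy : 0 < y := lt_of_le_of_lt (by positivity) h1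
  unfold baseDigit
  rw [if_neg (not_le.mpr hy)]
  have hb : ((2:ℕ):ℝ) = 2 := by norm_num
  rw [hb]
  rw [ceil_dyadic_right a j y m k hjk (by omega) h1 h2,
      ceil_dyadic_right a j y m (k+1) (by omega) (by omega) h1 h2]
  have hp : (2:ℤ) ^ (k + 1 - j) = 2 * 2 ^ (k - j) := by
    rw [← pow_succ']
    congr 1
    omega
  have h3 : ((2:ℕ):ℤ) = 2 := rfl
  rw [h3, hp]
  have : a * (2 * 2 ^ (k - j)) + 1 - 2 * (a * 2 ^ (k - j) + 1) + ((2:ℤ) - 1) = 0 := by ring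
  rw [this]
  rfl

lemma contains_of_agree (wx wy : ℕ → ℕ) (u : List ℕ) (i : ℕ) (r s : ℚ)
    (hui : u = (List.range u.length).map fun k => wx (i + k))
    (hrs : r ≤ s) (hpow : IsPowerOfExp u s)
    (hag : ∀ k < i + u.length, wy k = wx k) : ContainsPowInf wy r := by
  refine ⟨u, ⟨i, ?_⟩, s, hrs, hpow⟩
  conv_lhs => rw [hui]
  apply List.map_congr_left
  intro k hk
  rw [List.mem_range] at hk
  exact (hag (i + k) (by omega)).symm

lemma digit_agree_s5 (x y : ℝ) (hx : 0 < x) (hy : 0 < y) (M : ℕ)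
    (hc : ∀ j ≤ M, ⌈y * 2 ^ j⌉ = ⌈x * 2 ^ j⌉) :
    ∀ k, k + 1 ≤ M → baseDigit 2 y k = baseDigit 2 x k := by
  intro k hk
  unfold baseDigit
  rw [if_neg (not_le.mpr hy), if_neg (not_le.mpr hx)]
  have hb : ((2:ℕ):ℝ) = 2 := by norm_num
  rw [hb, hc k (by omega), hc (k+1) (by omega)]

lemma kappa2_le_s5 (y : ℝ) (N : ℕ) (hN : 0 < N) (r : ℚ) (hr : (N : ℚ) ≤ r)
    (h : ContainsPowInf (baseDigit 2 y) r) : kappa2 y ≤ 1 / (N : ℝ) := by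
  unfold kappa2 kappaBase
  exact kappa_le _ N hN r hr h

lemma backward_dir (x : ℝ) (hx : x ∈ Set.Icc (0:ℝ) 1) (h0 : kappa2 x = 0) :
    ContinuousWithinAt kappa2 (Set.Icc (0:ℝ) 1) x := by
  rw [Metric.continuousWithinAt_iff]
  intro ε hε
  obtain ⟨N, hN⟩ := exists_nat_gt (1/ε)
  have hNpos : 0 < N := by
    by_contra hc
    push_neg at hc
    interval_cases N
    · simp at hN; linarith [one_div_pos.mpr hε]
  have hNR : (0:ℝ) < N := by exact_mod_cast hNpos
  have hNε : 1/(N:ℝ) < ε := by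
    rw [div_lt_iff₀ hNR]
    have : 1 < ε * N := by
      have := (div_lt_iff₀ hε).mp hN
      linarith
    linarith
  have hdk : ∀ y : ℝ, kappa2 y ≤ 1/(N:ℝ) → dist (kappa2 y) (kappa2 x) < ε := by
    intro y hy
    rw [h0, Real.dist_eq, sub_zero, abs_of_nonneg (kappa_nonneg y)]
    linarith
  -- the zero-run bound for y just above a dyadic a/2^j
  have hrun : ∀ (a : ℤ), 0 ≤ a → ∀ (j : ℕ) (y : ℝ),
      (a:ℝ)/2^j < y → y < (a:ℝ)/2^j + 1/2^(j+N+2) → dist (kappa2 y) (kappa2 x) < ε := by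
    intro a ha j y hy1 hy2
    apply hdk
    apply kappa2_le_s5 y N hNpos ((N+1 : ℕ) : ℚ) (by exact_mod_cast Nat.le_succ N)
    have := run_contains (baseDigit 2 y) 0 j (N+1) (Nat.succ_pos N) ?_
    · exact this
    · intro k hk
      exact digit_zero_right a ha j y (j+N+2) (j+k) (by omega) (by omega) hy1 hy2
  rcases eq_or_lt_of_le hx.1 with hx0 | hxpos
  · -- x = 0
    refine ⟨1/2^(0+N+2), by positivity, fun y hy hyd => ?_⟩
    rcases eq_or_lt_of_le hy.1 with hy0 | hypos
    · rw [← hy0, ← hx0]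
      rw [Real.dist_eq, sub_self, abs_zero]
      exact hε
    · apply hrun 0 le_rfl 0 y (by simpa using hypos)
      have : dist y x = y := by
        rw [Real.dist_eq, ← hx0, sub_zero, abs_of_pos hypos]
      rw [this] at hyd
      simpa using hyd
  · -- x > 0 : extract a big power from w_x
    have htop := Einf_top_of_kappa_zero x h0
    have hlt : ((N:ℝ) : EReal) < Einf (baseDigit 2 x) := by
      rw [htop]; exact EReal.coe_lt_top _
    obtain ⟨e, ⟨r, hC, he⟩, hre⟩ := lt_sSup_iff.mp hlt
    have hrN : (N : ℚ) ≤ r := by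
      rw [he] at hre
      have : (N:ℝ) < (r:ℝ) := by exact_mod_cast hre
      have : (N:ℚ) < r := by exact_mod_cast this
      linarith
    obtain ⟨u, ⟨i, hui⟩, s, hrs, hpow⟩ := hC
    set M := i + u.length with hM
    obtain ⟨δL, hδLpos, hL⟩ := ceil_agree_left x hxpos M
    by_cases hdy : ∃ j : ℕ, ∃ a : ℤ, x * 2^j = (a:ℝ)
    · obtain ⟨j, a, hja⟩ := hdy
      have ha : 0 ≤ a := by
        have : (0:ℝ) ≤ (a:ℝ) := by rw [← hja]; positivity
        exact_mod_cast this
      have hxa : x = (a:ℝ)/2^j := by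
        rw [eq_div_iff (by positivity : (2:ℝ)^j ≠ 0)]
        exact hja
      refine ⟨min δL (1/2^(j+N+2)), lt_min hδLpos (by positivity), fun y hy hyd => ?_⟩
      rw [Real.dist_eq] at hyd
      rcases le_or_gt y x with hyx | hxy
      · have h1 : x - δL < y := by
          rw [abs_lt] at hyd
          have := min_le_left δL (1/2^(j+N+2))
          linarith [hyd.1]
        obtain ⟨hy0, hceq⟩ := hL y h1 hyx
        apply hdk
        apply kappa2_le_s5 y N hNpos r hrN
        apply contains_of_agree (baseDigit 2 x) _ u i r s hui hrs hpow
        intro k hk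
        exact digit_agree_s5 x y hxpos hy0 M hceq k (by omega)
      · apply hrun a ha j y (hxa ▸ hxy)
        rw [abs_lt] at hyd
        have := min_le_right δL (1/2^(j+N+2))
        rw [← hxa]
        linarith [hyd.2]
    · push_neg at hdy
      obtain ⟨δR, hδRpos, hR⟩ := ceil_agree_right x M (fun j _ a => hdy j a)
      refine ⟨min δL δR, lt_min hδLpos hδRpos, fun y hy hyd => ?_⟩
      rw [Real.dist_eq, abs_lt] at hyd
      apply hdk
      apply kappa2_le_s5 y N hNpos r hrN
      apply contains_of_agree (baseDigit 2 x) _ u i r s hui hrs hpow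
      rcases le_or_gt y x with hyx | hxy
      · have h1 : x - δL < y := by
          have := min_le_left δL δR
          linarith [hyd.1]
        obtain ⟨hy0, hceq⟩ := hL y h1 hyx
        intro k hk
        exact digit_agree_s5 x y hxpos hy0 M hceq k (by omega)
      · have h2 : y < x + δR := by
          have := min_le_right δL δR
          linarith [hyd.2]
        have hceq := hR y (le_of_lt hxy) h2
        intro k hk
        exact digit_agree_s5 x y hxpos (lt_trans hxpos hxy) M hceq k (by omega)

theorem stmt_5 (x : ℝ) (hx : x ∈ Set.Icc (0 : ℝ) 1) :
    ContinuousWithinAt kappa2 (Set.Icc (0 : ℝ) 1) x ↔ kappa2 x = 0 :=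
  ⟨forward_dir x hx, backward_dir x hx⟩
end

section
/- The zero set C₂ := { x ∈ [0,1] : κ₂(x) = 0 } is comeagre (residual) in [0,1] and has full Lebesgue measure, i.e., the Lebesgue measure of C₂ equals 1. -/
lemma containsPow_replicate {w : ℕ → ℕ} {n i : ℕ} (hn : 0 < n) (h : ∀ j < n, w (i+j) = 0) :
    ContainsPowInf w (n : ℚ) := by
  refine ⟨List.replicate n 0, ⟨i, ?_⟩, (n:ℚ), le_refl _,
    n, 1, ⟨hn, one_pos, by simp, [0], [], n, by simp, hn, List.nil_prefix, by simp, by simp⟩,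
    by simp⟩
  simp only [List.length_replicate]
  symm
  rw [List.eq_replicate_iff]
  refine ⟨by simp, ?_⟩
  intro b hb
  simp only [List.mem_map, List.mem_range] at hb
  obtain ⟨k, hk, rfl⟩ := hb
  exact h k hk

lemma einf_eq_top {w : ℕ → ℕ} (h : ∀ n : ℕ, 0 < n → ContainsPowInf w ((n:ℚ))) : Einf w = ⊤ := by
  rw [Einf, sSup_eq_top]
  intro b hb
  obtain ⟨n, hn0, hn⟩ : ∃ n : ℕ, 0 < n ∧ b < ((n : ℝ) : EReal) := by
    induction b using EReal.rec with
    | bot => exact ⟨1, one_pos, EReal.bot_lt_coe _⟩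
    | coe r =>
      obtain ⟨n, hn⟩ := exists_nat_gt r
      exact ⟨n + 1, Nat.succ_pos _, by exact_mod_cast lt_trans hn (by exact_mod_cast Nat.lt_succ_self n)⟩
    | top => exact absurd hb (lt_irrefl _)
  exact ⟨((n:ℝ) : EReal), ⟨(n : ℚ), h n hn0, by push_cast; rfl⟩, hn⟩

lemma kappa2_zero_of_runs {x : ℝ} (h : ∀ n : ℕ, ∃ i, ∀ j < n, baseDigit 2 x (i+j) = 0) :
    kappa2 x = 0 := by
  have : Einf (baseDigit 2 x) = ⊤ := by
    apply einf_eq_top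
    intro n hn
    obtain ⟨i, hi⟩ := h n
    exact containsPow_replicate hn hi
  simp [kappa2, kappaBase, this]

lemma baseDigit_two (x : ℝ) (hx : 0 < x) (k : ℕ) :
    baseDigit 2 x k = (⌈x * 2^(k+1)⌉ - 2*⌈x*2^k⌉ + 1).toNat := by
  unfold baseDigit
  rw [if_neg (not_le.mpr hx)]
  norm_num

lemma digit_zero_run {x : ℝ} {m i n : ℕ} (h1 : (m:ℝ)/2^i < x)
    (h2 : x ≤ (m:ℝ)/2^i + 1/2^(i+n)) :
    ∀ j < n, baseDigit 2 x (i+j) = 0 := by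
  have hx : 0 < x := lt_of_le_of_lt (by positivity) h1
  have key : ∀ j ≤ n, ⌈x * (2:ℝ)^(i+j)⌉ = (m : ℤ) * 2^j + 1 := by
    intro j hj
    rw [Int.ceil_eq_iff]
    have e : ((m:ℝ)/2^i) * 2^(i+j) = (m:ℝ) * 2^j := by
      rw [pow_add]; field_simp
    constructor
    · push_cast
      calc ((m:ℝ) * 2^j + 1) - 1 = ((m:ℝ)/2^i) * 2^(i+j) := by rw [e]; ring
        _ < x * 2^(i+j) := by
            apply mul_lt_mul_of_pos_right h1; positivity
    · push_cast
      calc x * 2^(i+j) ≤ ((m:ℝ)/2^i + 1/2^(i+n)) * 2^(i+j) := by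
            apply mul_le_mul_of_nonneg_right h2; positivity
        _ = (m:ℝ)*2^j + 2^(i+j)/2^(i+n) := by rw [add_mul, e]; ring
        _ ≤ (m:ℝ)*2^j + 1 := by
            have hle : (2:ℝ)^(i+j) ≤ 2^(i+n) := by
              apply pow_le_pow_right₀ (by norm_num); omega
            have h2n : (0:ℝ) < 2^(i+n) := by positivity
            have : (2:ℝ)^(i+j)/2^(i+n) ≤ 1 := (div_le_one h2n).mpr hle
            linarith
  intro j hj
  rw [baseDigit_two x hx]
  have hd1 : ⌈x * (2:ℝ)^(i+j)⌉ = (m:ℤ)*2^j + 1 := key j (le_of_lt hj)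
  have hd2 : ⌈x * (2:ℝ)^(i+j+1)⌉ = (m:ℤ)*2^(j+1) + 1 := by
    have := key (j+1) hj
    rwa [← add_assoc] at this
  rw [hd1, hd2]
  have : (m:ℤ)*2^(j+1) + 1 - 2*((m:ℤ)*2^j+1) + 1 = 0 := by ring
  rw [this]
  rfl

lemma nat_block_ne_zero {a T e n : ℕ} (h1 : a * 2^(e+n) + 2^e ≤ T)
    (h2 : T < (a+1) * 2^(e+n)) : (T / 2^e) % 2^n ≠ 0 := by
  have hPQ : (2:ℕ)^(e+n) = 2^e * 2^n := pow_add 2 e n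
  set P := (2:ℕ)^e with hPdef
  set Q := (2:ℕ)^n with hQdef
  rw [hPQ] at h1 h2
  have hP : 0 < P := Nat.pow_pos (by norm_num)
  have hQ : 0 < Q := Nat.pow_pos (by norm_num)
  set r : ℕ := T - a * (P * Q) with hrdef
  have e1 : a * (P * Q) = P * (a * Q) := by ring
  have e2 : (a + 1) * (P * Q) = a * (P * Q) + P * Q := by ring
  have hT : T = r + P * (a * Q) := by omega
  have hr1 : P ≤ r := by omega
  have hr2 : r < P * Q := by omega
  rw [hT, Nat.add_mul_div_left _ _ hP, Nat.add_mul_mod_self_right]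
  have hlt : r / P < Q := by
    rw [Nat.div_lt_iff_lt_mul hP]
    have e3 : P * Q = Q * P := by ring
    omega
  rw [Nat.mod_eq_of_lt hlt]
  have : 1 ≤ r / P := (Nat.one_le_div_iff hP).mpr hr1
  omega

-- basic ceiling facts for x ∈ (0,1]
lemma ceilT_facts {x : ℝ} (hx0 : 0 < x) (hx1 : x ≤ 1) (L : ℕ) :
    ((((⌈x * 2^L⌉ - 1).toNat : ℕ) : ℤ) = ⌈x * 2^L⌉ - 1) ∧
    (⌈x * 2^L⌉ - 1).toNat < 2^L ∧
    (((⌈x * 2^L⌉ - 1).toNat : ℝ)/2^L < x ∧ x ≤ ((⌈x * 2^L⌉ - 1).toNat + 1 : ℝ)/2^L) := by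
  have hL : (0:ℝ) < 2^L := by positivity
  have hc1 : 1 ≤ ⌈x * 2^L⌉ := by
    apply Int.le_ceil_iff.mpr; push_cast; nlinarith
  have hc2 : ⌈x * 2^L⌉ ≤ 2^L := by
    apply Int.ceil_le.mpr; push_cast; nlinarith
  have ht : (((⌈x * 2^L⌉ - 1).toNat : ℕ) : ℤ) = ⌈x * 2^L⌉ - 1 :=
    Int.toNat_of_nonneg (by omega)
  refine ⟨ht, ?_, ?_, ?_⟩
  · have : ((⌈x * 2^L⌉ - 1).toNat : ℤ) < (2^L : ℤ) := by rw [ht]; omega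
    exact_mod_cast this
  · have h3 : ((⌈x * 2^L⌉ : ℝ) - 1) < x * 2^L := by
      have := Int.ceil_lt_add_one (x * 2^L); linarith [Int.le_ceil (x*2^L),
        (Int.sub_one_lt_iff.mpr (le_refl ⌈x * 2^L⌉))]
    have h4 : (((⌈x * 2^L⌉ - 1).toNat : ℝ)) = (⌈x * 2^L⌉ : ℝ) - 1 := by
      exact_mod_cast congrArg (fun z : ℤ => (z : ℝ)) ht
    rw [h4, div_lt_iff₀ hL]
    have := Int.ceil_lt_add_one (x * 2^L)
    linarith
  · have h4 : (((⌈x * 2^L⌉ - 1).toNat : ℝ)) = (⌈x * 2^L⌉ : ℝ) - 1 := by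
      exact_mod_cast congrArg (fun z : ℤ => (z : ℝ)) ht
    rw [h4, le_div_iff₀ hL]
    have := Int.le_ceil (x * 2^L)
    linarith

lemma block_ne_zero {x : ℝ} (hx0 : 0 < x) (hx1 : x ≤ 1) {n M j : ℕ} (hj : j < M)
    (hbad : ¬ (∀ k < n, baseDigit 2 x (j*n + k) = 0)) :
    ((⌈x * 2^(M*n)⌉ - 1).toNat / 2^((M-1-j)*n)) % 2^n ≠ 0 := by
  set L := M*n with hLdef
  set i := j*n with hidef
  set e := (M-1-j)*n with hedef
  have hM : i + (e + n) = L := by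
    have hje : j + (M - 1 - j) + 1 = M := by omega
    calc i + (e + n) = (j + (M-1-j) + 1) * n := by rw [hidef, hedef]; ring
      _ = L := by rw [hje]
  obtain ⟨haZ, haL, ha1, ha2⟩ := ceilT_facts hx0 hx1 i
  set a : ℕ := (⌈x * 2^i⌉ - 1).toNat with hadef
  obtain ⟨hTZ, hTL, hT1, hT2⟩ := ceilT_facts hx0 hx1 L
  set T : ℕ := (⌈x * 2^L⌉ - 1).toNat with hTdef
  have hgt : (a:ℝ)/2^i + 1/2^(i+n) < x := by
    by_contra h
    push_neg at h
    exact hbad (fun k hk => digit_zero_run ha1 h k hk)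
  have p1 : (2:ℝ)^L = 2^i * 2^(e+n) := by rw [← pow_add, hM]
  have p2 : (2:ℝ)^L = 2^(i+n) * 2^e := by rw [← pow_add]; congr 1; omega
  have hi2 : (0:ℝ) < 2^i := by positivity
  have hin2 : (0:ℝ) < 2^(i+n) := by positivity
  have q1 : ((a:ℝ)/2^i) * 2^L = a * 2^(e+n) := by rw [p1]; field_simp
  have q2 : ((1:ℝ)/2^(i+n)) * 2^L = 2^e := by rw [p2]; field_simp
  have q3 : (((a:ℝ)+1)/2^i) * 2^L = ((a:ℝ)+1) * 2^(e+n) := by rw [p1]; field_simp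
  have ineq1 : (a:ℝ) * 2^(e+n) + 2^e < x * 2^L := by
    calc (a:ℝ)*2^(e+n) + 2^e = ((a:ℝ)/2^i + 1/2^(i+n)) * 2^L := by rw [add_mul, q1, q2]
      _ < x * 2^L := mul_lt_mul_of_pos_right hgt (by positivity)
  have ineq2 : x * 2^L ≤ ((a:ℝ)+1) * 2^(e+n) := by
    rw [← q3]
    exact mul_le_mul_of_nonneg_right ha2 (by positivity)
  have c1 : (a:ℤ) * 2^(e+n) + 2^e < ⌈x * 2^L⌉ := by
    rw [Int.lt_ceil]; push_cast; exact ineq1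
  have c2 : ⌈x * 2^L⌉ ≤ ((a:ℤ)+1) * 2^(e+n) := by
    rw [Int.ceil_le]; push_cast; exact ineq2
  have n1 : a * 2^(e+n) + 2^e ≤ T := by
    have : (a:ℤ) * 2^(e+n) + 2^e ≤ (T:ℤ) := by omega
    exact_mod_cast this
  have n2 : T < (a+1) * 2^(e+n) := by
    have : (T:ℤ) < ((a:ℤ)+1) * 2^(e+n) := by omega
    exact_mod_cast this
  exact nat_block_ne_zero n1 n2

def Sfin (n M : ℕ) : Finset ℕ :=
  (Finset.range (2^(M*n))).filter (fun t => ∀ j < M, (t / 2^(j*n)) % 2^n ≠ 0)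

lemma card_Sfin (n M : ℕ) : (Sfin n M).card ≤ (2^n - 1)^M := by
  induction M with
  | zero =>
    simp only [Sfin, pow_zero]
    apply le_trans (Finset.card_filter_le _ _)
    simp
  | succ M ih =>
    have h2n : 0 < 2^n := Nat.pow_pos (by norm_num)
    have step : (Sfin n (M+1)).card ≤
        (((Finset.range (2^n)).filter (fun s => s ≠ 0)) ×ˢ (Sfin n M)).card := by
      apply Finset.card_le_card_of_injOn (fun t => (t % 2^n, t / 2^n))
      · intro t ht
        simp only [Finset.mem_coe, Sfin, Finset.mem_filter, Finset.mem_range] at ht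
        obtain ⟨htlt, hcond⟩ := ht
        simp only [Finset.mem_coe, Finset.mem_product, Finset.mem_filter, Finset.mem_range, Sfin]
        have hpe : 2^(M*n) * 2^n = 2^((M+1)*n) := by rw [← pow_add]; congr 1; ring
        refine ⟨⟨Nat.mod_lt _ h2n, ?_⟩, ?_, ?_⟩
        · have := hcond 0 (Nat.succ_pos M)
          simpa using this
        · rw [Nat.div_lt_iff_lt_mul h2n]
          omega
        · intro j hj
          have hc := hcond (j+1) (by omega)
          rw [Nat.div_div_eq_div_mul]
          have he : 2^n * 2^(j*n) = 2^((j+1)*n) := by rw [← pow_add]; congr 1; ring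
          rw [he]
          exact hc
      · intro t1 h1 t2 h2 heq
        simp only [Prod.mk.injEq] at heq
        obtain ⟨hm, hd⟩ := heq
        have e1 := Nat.div_add_mod t1 (2^n)
        have e2 := Nat.div_add_mod t2 (2^n)
        rw [hm, hd] at e1
        omega
    rw [Finset.card_product] at step
    have hfc : ((Finset.range (2^n)).filter (fun s => s ≠ 0)).card = 2^n - 1 := by
      rw [Finset.filter_ne', Finset.card_erase_of_mem (Finset.mem_range.mpr h2n)]
      simp
    calc (Sfin n (M+1)).card ≤ (2^n - 1) * (Sfin n M).card := by rw [← hfc]; exact step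
      _ ≤ (2^n - 1) * (2^n - 1)^M := Nat.mul_le_mul_left _ ih
      _ = (2^n - 1)^(M+1) := by rw [pow_succ]; ring

def Gset (n : ℕ) : Set ℝ := ⋃ (i : ℕ) (m : ℕ),
  Set.Ioo ((m:ℝ)/2^i) ((m:ℝ)/2^i + 1/2^(i+n))

lemma isOpen_Gset (n : ℕ) : IsOpen (Gset n) :=
  isOpen_iUnion fun _ => isOpen_iUnion fun _ => isOpen_Ioo

lemma dense_Gset_Icc (n : ℕ) :
    Dense ((fun x : Set.Icc (0:ℝ) 1 => (x : ℝ)) ⁻¹' (Gset n)) := by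
  rw [Metric.dense_iff]
  intro z r hr
  obtain ⟨i, hi⟩ : ∃ i : ℕ, (1/2:ℝ)^i < r/3 := by
    apply exists_pow_lt_of_lt_one (by linarith) (by norm_num)
  have hpi : (1/2:ℝ)^i = 1/2^i := by rw [div_pow, one_pow]
  rw [hpi] at hi
  have h2i : (0:ℝ) < 2^i := by positivity
  have h2ipos : (0:ℝ) < 1/2^i := by positivity
  set x : ℝ := (z : ℝ) with hxdef
  have hx0 : 0 ≤ x := z.2.1
  have hx1 : x ≤ 1 := z.2.2
  set t : ℝ := min x (1 - 1/2^i) with htdef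
  have h12 : (1:ℝ)/2^i ≤ 1 := by
    rw [div_le_one h2i]; exact one_le_pow₀ (by norm_num)
  have ht0 : 0 ≤ t := le_min hx0 (by linarith)
  have htle : t ≤ x := min_le_left _ _
  have htx : x - t ≤ 1/2^i := by
    rcases min_cases x (1 - 1/2^i) with ⟨h, _⟩ | ⟨h, _⟩
    · rw [htdef, h]; linarith
    · rw [htdef, h]; linarith
  have ht1 : t ≤ 1 - 1/2^i := min_le_right _ _
  set m : ℕ := ⌊t * 2^i⌋.toNat with hmdef
  have hmf : (m : ℝ) = ⌊t * 2^i⌋ := by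
    rw [hmdef]
    exact_mod_cast Int.toNat_of_nonneg (Int.floor_nonneg.mpr (by positivity))
  have hm1 : (m:ℝ) ≤ t * 2^i := by rw [hmf]; exact Int.floor_le _
  have hm2 : t * 2^i < m + 1 := by rw [hmf]; exact Int.lt_floor_add_one _
  have hmt : (m:ℝ)/2^i ≤ t := by rw [div_le_iff₀ h2i]; exact hm1
  have htm : t < (m:ℝ)/2^i + 1/2^i := by
    have : t < ((m:ℝ)+1)/2^i := (lt_div_iff₀ h2i).mpr hm2
    calc t < ((m:ℝ)+1)/2^i := this
      _ = (m:ℝ)/2^i + 1/2^i := by ring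
  have hmle : (m:ℝ)/2^i ≤ 1 - 1/2^i := le_trans hmt ht1
  have hq : (0:ℝ) < 1/2^(i+n+1) := by positivity
  have hsmall : (1:ℝ)/2^(i+n+1) < 1/2^i := by
    apply div_lt_div_of_pos_left one_pos h2i
    apply pow_lt_pow_right₀ (by norm_num); omega
  have hsmall2 : (1:ℝ)/2^(i+n+1) < 1/2^(i+n) := by
    apply div_lt_div_of_pos_left one_pos (by positivity)
    apply pow_lt_pow_right₀ (by norm_num); omega
  have hy0 : 0 ≤ (m:ℝ)/2^i + 1/2^(i+n+1) := by positivity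
  have hy1 : (m:ℝ)/2^i + 1/2^(i+n+1) ≤ 1 := by linarith
  refine ⟨⟨(m:ℝ)/2^i + 1/2^(i+n+1), hy0, hy1⟩, ?_, ?_⟩
  · rw [Metric.mem_ball, Subtype.dist_eq, Real.dist_eq]
    have h1 : |((m:ℝ)/2^i + 1/2^(i+n+1)) - x| < 3 * (1/2^i) := by
      rw [abs_lt]
      constructor <;> [skip; skip] <;> nlinarith [hq, hsmall, htm, hmt, htx, htle]
    calc |((m:ℝ)/2^i + 1/2^(i+n+1)) - x| < 3 * (1/2^i) := h1
      _ < 3 * (r/3) := by linarith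
      _ = r := by ring
  · simp only [Set.mem_preimage]
    refine Set.mem_iUnion.mpr ⟨i, Set.mem_iUnion.mpr ⟨m, ?_⟩⟩
    exact ⟨by linarith, by linarith⟩


lemma kappa2_zero_of_mem_Gsets {x : ℝ} (h : ∀ n : ℕ, x ∈ Gset n) : kappa2 x = 0 := by
  apply kappa2_zero_of_runs
  intro n
  obtain ⟨i, hi⟩ := Set.mem_iUnion.mp (h n)
  obtain ⟨m, hm⟩ := Set.mem_iUnion.mp hi
  obtain ⟨hm1, hm2⟩ := hm
  exact ⟨i, digit_zero_run hm1 (le_of_lt hm2)⟩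

def Bset (n : ℕ) : Set ℝ :=
  {x | x ∈ Set.Ioc (0:ℝ) 1 ∧ ∀ i, ∃ k < n, baseDigit 2 x (i+k) ≠ 0}

lemma Bset_subset (n M : ℕ) :
    Bset n ⊆ ⋃ t ∈ Sfin n M, Set.Ioc ((t:ℝ)/2^(M*n)) (((t:ℝ)+1)/2^(M*n)) := by
  intro x hx
  obtain ⟨⟨hx0, hx1⟩, hcond⟩ := hx
  obtain ⟨hTZ, hTL, hT1, hT2⟩ := ceilT_facts hx0 hx1 (M*n)
  have hmem : (⌈x * 2^(M*n)⌉ - 1).toNat ∈ Sfin n M := by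
    simp only [Sfin, Finset.mem_filter, Finset.mem_range]
    refine ⟨hTL, ?_⟩
    intro j' hj'
    have hjj : (M - 1 - (M - 1 - j')) = j' := by omega
    have hbad : ¬ (∀ k < n, baseDigit 2 x ((M - 1 - j')*n + k) = 0) := by
      push_neg
      obtain ⟨k, hk, hne⟩ := hcond ((M - 1 - j')*n)
      exact ⟨k, hk, hne⟩
    have := block_ne_zero hx0 hx1 (show M - 1 - j' < M by omega) hbad
    rwa [hjj] at this
  exact Set.mem_biUnion hmem (Set.mem_Ioc.mpr ⟨hT1, hT2⟩)

open MeasureTheory in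
lemma volume_Bset (n : ℕ) : volume (Bset n) = 0 := by
  have h2n : (0:ℕ) < 2^n := Nat.pow_pos (by norm_num)
  set r : ENNReal := ((2^n - 1 : ℕ) : ENNReal) / 2^n with hrdef
  have hcast : ((2:ENNReal))^n = ((2^n : ℕ) : ENNReal) := by push_cast; rfl
  have hrlt : r < 1 := by
    rw [hrdef, ENNReal.div_lt_iff (Or.inl (by simp)) (Or.inl (by simp)), one_mul, hcast,
      Nat.cast_lt]
    omega
  have key : ∀ M : ℕ, volume (Bset n) ≤ r ^ M := by
    intro M
    have hof : ENNReal.ofReal ((1:ℝ)/2^(M*n)) = ((2:ENNReal)^(M*n))⁻¹ := by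
      rw [one_div, ENNReal.ofReal_inv_of_pos (by positivity),
        ENNReal.ofReal_pow (by norm_num : (0:ℝ) ≤ 2)]
      norm_num
    calc volume (Bset n)
        ≤ volume (⋃ t ∈ Sfin n M, Set.Ioc ((t:ℝ)/2^(M*n)) (((t:ℝ)+1)/2^(M*n))) :=
          measure_mono (Bset_subset n M)
      _ ≤ ∑ t ∈ Sfin n M, volume (Set.Ioc ((t:ℝ)/2^(M*n)) (((t:ℝ)+1)/2^(M*n))) :=
          measure_biUnion_finset_le _ _
      _ = ∑ _t ∈ Sfin n M, ENNReal.ofReal ((1:ℝ)/2^(M*n)) := by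
          apply Finset.sum_congr rfl
          intro t _
          rw [Real.volume_Ioc]
          congr 1
          ring
      _ = ((Sfin n M).card : ENNReal) * ENNReal.ofReal ((1:ℝ)/2^(M*n)) := by
          rw [Finset.sum_const, nsmul_eq_mul]
      _ ≤ (((2^n - 1)^M : ℕ) : ENNReal) * ENNReal.ofReal ((1:ℝ)/2^(M*n)) := by
          gcongr
          exact_mod_cast card_Sfin n M
      _ = r ^ M := by
          rw [hof, hrdef, div_eq_mul_inv, mul_pow, ← ENNReal.inv_pow, ← pow_mul,
            Nat.cast_pow, mul_comm n M]
  have htend := ENNReal.tendsto_pow_atTop_nhds_zero_of_lt_one hrlt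
  have hle : volume (Bset n) ≤ 0 :=
    ge_of_tendsto htend (Filter.Eventually.of_forall key)
  exact le_antisymm hle zero_le

theorem stmt_6 :
    {x : Set.Icc (0 : ℝ) 1 | kappa2 ↑x = 0} ∈ residual (Set.Icc (0 : ℝ) 1) ∧
    MeasureTheory.volume {x : ℝ | x ∈ Set.Icc (0 : ℝ) 1 ∧ kappa2 x = 0} = 1 := by
  constructor
  · have hU : ∀ n : ℕ, (fun x : Set.Icc (0:ℝ) 1 => (x:ℝ)) ⁻¹' (Gset n) ∈
        residual (Set.Icc (0:ℝ) 1) := fun n =>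
      residual_of_dense_open ((isOpen_Gset n).preimage continuous_subtype_val)
        (dense_Gset_Icc n)
    have hInt : (⋂ n : ℕ, (fun x : Set.Icc (0:ℝ) 1 => (x:ℝ)) ⁻¹' (Gset n)) ∈
        residual (Set.Icc (0:ℝ) 1) := (countable_iInter_mem).mpr hU
    apply Filter.mem_of_superset hInt
    intro z hz
    simp only [Set.mem_iInter, Set.mem_preimage] at hz
    exact kappa2_zero_of_mem_Gsets hz
  · have hIcc : MeasureTheory.volume (Set.Icc (0:ℝ) 1) = 1 := by
      rw [Real.volume_Icc]; norm_num
    have hbadsub : Set.Icc (0:ℝ) 1 ⊆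
        {x : ℝ | x ∈ Set.Icc (0 : ℝ) 1 ∧ kappa2 x = 0} ∪ (⋃ n : ℕ, Bset n) := by
      intro x hx
      by_cases hk : kappa2 x = 0
      · exact Or.inl ⟨hx, hk⟩
      · right
        have hx0 : 0 < x := by
          rcases lt_or_eq_of_le hx.1 with h | h
          · exact h
          · exfalso
            apply hk
            apply kappa2_zero_of_runs
            intro n
            refine ⟨0, fun j _ => ?_⟩
            unfold baseDigit
            rw [if_pos (le_of_eq h.symm)]
        have hnr : ¬ ∀ n : ℕ, ∃ i, ∀ j < n, baseDigit 2 x (i+j) = 0 :=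
          fun hc => hk (kappa2_zero_of_runs hc)
        push_neg at hnr
        obtain ⟨n, hn⟩ := hnr
        refine Set.mem_iUnion.mpr ⟨n, ⟨⟨hx0, hx.2⟩, ?_⟩⟩
        intro i
        have h := hn i
        exact h
    have hbad0 : MeasureTheory.volume (⋃ n : ℕ, Bset n) = 0 :=
      MeasureTheory.measure_iUnion_null fun n => volume_Bset n
    have h1 : (1:ENNReal) ≤ MeasureTheory.volume
        {x : ℝ | x ∈ Set.Icc (0 : ℝ) 1 ∧ kappa2 x = 0} := by
      calc (1:ENNReal) = MeasureTheory.volume (Set.Icc (0:ℝ) 1) := hIcc.symm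
        _ ≤ MeasureTheory.volume ({x : ℝ | x ∈ Set.Icc (0 : ℝ) 1 ∧ kappa2 x = 0}
              ∪ ⋃ n, Bset n) := MeasureTheory.measure_mono hbadsub
        _ ≤ MeasureTheory.volume {x : ℝ | x ∈ Set.Icc (0 : ℝ) 1 ∧ kappa2 x = 0}
              + MeasureTheory.volume (⋃ n, Bset n) := MeasureTheory.measure_union_le _ _
        _ = _ := by rw [hbad0, add_zero]
    have h2 : MeasureTheory.volume {x : ℝ | x ∈ Set.Icc (0 : ℝ) 1 ∧ kappa2 x = 0} ≤ 1 := by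
      calc MeasureTheory.volume {x : ℝ | x ∈ Set.Icc (0 : ℝ) 1 ∧ kappa2 x = 0}
          ≤ MeasureTheory.volume (Set.Icc (0:ℝ) 1) := MeasureTheory.measure_mono
            (fun x hx => hx.1)
        _ = 1 := hIcc
    exact le_antisymm h2 h1
end

section
/- Both the zero set C₂ := { x ∈ [0,1] : κ₂(x) = 0 } and its complement D₂ := [0,1] \ C₂ are dense in [0,1], and C₂ is neither an open nor a closed subset of [0,1] (equivalently, the same holds for D₂). -/
/-! ### Auxiliary lemmas -/

section Aux

lemma tm_zero : tm 0 = 0 := by rw [tm]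

lemma tm_one : tm 1 = 1 := by
  show tm (0+1) = 1
  rw [tm]
  norm_num [tm_zero]

lemma tm_double (n : ℕ) : tm (2*n) = tm n := by
  cases n with
  | zero => rfl
  | succ m =>
    show tm (2*m+1+1) = _
    rw [tm]
    have : (2*m+1+1) % 2 = 0 := by omega
    simp [this, show (2*m+1+1)/2 = m+1 by omega]

lemma tm_double' (n : ℕ) : tm (2*n+1) = 1 - tm n := by
  cases n with
  | zero => simpa [tm_zero] using tm_one
  | succ m =>
    show tm (2*m+2+1) = _
    rw [tm]
    have : (2*m+2+1) % 2 = 1 := by omega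
    simp [this, show (2*m+2+1)/2 = m+1 by omega]

lemma tm_ne (n : ℕ) : tm (2*n) ≠ tm (2*n+1) := by
  rw [tm_double, tm_double']
  exact (by decide : ∀ x : Fin 2, x ≠ 1 - x) (tm n)

lemma no_three (n : ℕ) : ¬ (tm n = tm (n+1) ∧ tm (n+1) = tm (n+2)) := by
  rcases Nat.even_or_odd n with ⟨m, hm⟩ | ⟨m, hm⟩
  · rintro ⟨h1, -⟩
    refine tm_ne m ?_
    rw [show 2*m = n by omega]
    exact h1
  · rintro ⟨-, h2⟩
    refine tm_ne (m+1) ?_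
    rw [show 2*(m+1) = n+1 by omega]
    exact h2

lemma tm_two : tm 2 = 1 := by
  have := tm_double 1
  norm_num [tm_one] at this
  exact this

lemma fin2_sub_inj : ∀ x y : Fin 2, (1:Fin 2) - x = 1 - y → x = y := by decide
lemma fin2_sub_sub : ∀ x : Fin 2, 1 - (1 - x) = x := by decide

theorem tm_of : ∀ p, 0 < p → ∀ i, ¬ (∀ j, j ≤ p → tm (i+j) = tm (i+j+p)) := by
  intro p
  induction p using Nat.strong_induction_on with
  | _ p IH =>
    intro hp i H
    rcases Nat.even_or_odd p with ⟨q, hq⟩ | ⟨q, hq⟩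
    · -- p = q + q
      have hq1 : 0 < q := by omega
      rcases Nat.even_or_odd i with ⟨a, ha⟩ | ⟨a, ha⟩
      · refine IH q (by omega) hq1 a ?_
        intro j hj
        have h := H (2*j) (by omega)
        rw [show i + 2*j = 2*(a+j) by omega, show 2*(a+j) + p = 2*(a+j+q) by omega,
          tm_double, tm_double] at h
        exact h
      · refine IH q (by omega) hq1 a ?_
        intro j hj
        have h := H (2*j) (by omega)
        rw [show i + 2*j = 2*(a+j)+1 by omega, show 2*(a+j)+1 + p = 2*(a+j+q)+1 by omega,
          tm_double', tm_double'] at h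
        exact fin2_sub_inj _ _ h
    · -- p = 2q+1
      rcases Nat.eq_zero_or_pos q with hq0 | hq1
      · subst hq0
        have h0 := H 0 (by omega)
        have h1 := H 1 (by omega)
        exact no_three i ⟨by simpa [hq] using h0, by
          rw [show i + 1 + p = i + 2 by omega] at h1; simpa using h1⟩
      · rcases Nat.even_or_odd i with ⟨a, ha⟩ | ⟨a, ha⟩
        · have key : ∀ a', i ≤ 2*a' → 2*a'+1 ≤ i + p → tm (a'+q) = tm (a'+q+1) := by
            intro a' h1 h2
            have hA := H (2*a' - i) (by omega)
            rw [show i + (2*a' - i) = 2*a' by omega,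
              show 2*a' + p = 2*(a'+q)+1 by omega, tm_double, tm_double'] at hA
            have hB := H (2*a'+1 - i) (by omega)
            rw [show i + (2*a'+1 - i) = 2*a'+1 by omega,
              show 2*a'+1 + p = 2*(a'+q+1) by omega, tm_double', tm_double] at hB
            calc tm (a'+q) = 1 - (1 - tm (a'+q)) := (fin2_sub_sub _).symm
              _ = 1 - tm a' := by rw [hA]
              _ = tm (a'+q+1) := hB
          have k1 := key a (by omega) (by omega)
          have k2 := key (a+1) (by omega) (by omega)
          rw [show a+1+q = a+q+1 by omega] at k2
          exact no_three (a+q) ⟨k1, k2⟩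
        · have key : ∀ a', i ≤ 2*a'+1 → 2*a'+2 ≤ i + p → tm a' = tm (a'+1) := by
            intro a' h1 h2
            have hA := H (2*a'+1 - i) (by omega)
            rw [show i + (2*a'+1 - i) = 2*a'+1 by omega,
              show 2*a'+1 + p = 2*(a'+q+1) by omega, tm_double', tm_double] at hA
            have hB := H (2*a'+2 - i) (by omega)
            rw [show i + (2*a'+2 - i) = 2*(a'+1) by omega,
              show 2*(a'+1) + p = 2*(a'+q+1)+1 by omega, tm_double, tm_double'] at hB
            calc tm a' = 1 - (1 - tm a') := (fin2_sub_sub _).symm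
              _ = 1 - tm (a'+q+1) := by rw [hA]
              _ = tm (a'+1) := hB.symm
          have k1 := key a (by omega) (by omega)
          have k2 := key (a+1) (by omega) (by omega)
          exact no_three a ⟨k1, k2⟩

/-! ### List lemmas -/

lemma flatten_rep_singleton {α : Type*} (n : ℕ) (a : α) :
    (List.replicate n [a]).flatten = List.replicate n a := by
  induction n with
  | zero => rfl
  | succ m ih => simp [List.replicate_succ, ih]

lemma rep_prefix {α : Type*} {x y : List α} (hyx : y <+: x) (k : ℕ) :
    (List.replicate k x).flatten ++ y <+: (List.replicate (k+1) x).flatten ++ y := by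
  induction k with
  | zero =>
    obtain ⟨z, hz⟩ := hyx
    exact ⟨z ++ y, by simp [← hz]⟩
  | succ m ih =>
    have e1 : (List.replicate (m+1) x).flatten ++ y = x ++ ((List.replicate m x).flatten ++ y) := by
      rw [List.replicate_succ, List.flatten_cons, List.append_assoc]
    have e2 : (List.replicate (m+1+1) x).flatten ++ y
        = x ++ ((List.replicate (m+1) x).flatten ++ y) := by
      rw [List.replicate_succ (n := m+1), List.flatten_cons, List.append_assoc]
    rw [e1, e2]
    obtain ⟨z, hz⟩ := ih
    exact ⟨z, by rw [List.append_assoc, hz]⟩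

lemma pq_drop_prefix {α : Type*} {u : List α} {p q : ℕ} (h : IsPQPower u p q) :
    u.drop q <+: u := by
  obtain ⟨hp, hq, hlen, x, y, n, hx, hn, hyx, hxq, hu⟩ := h
  obtain ⟨m, rfl⟩ : ∃ m, n = m + 1 := ⟨n - 1, by omega⟩
  have hu2 : u = x ++ ((List.replicate m x).flatten ++ y) := by
    rw [hu, List.replicate_succ, List.flatten_cons, List.append_assoc]
  have hdrop : u.drop q = (List.replicate m x).flatten ++ y := by
    rw [hu2, List.drop_append_of_le_length (by omega), ← hxq]
    simp
  rw [hdrop, hu2]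
  have := rep_prefix hyx m
  rw [List.replicate_succ, List.flatten_cons, List.append_assoc] at this
  exact this

lemma occ_period {α : Type*} {u : List α} {w : ℕ → α} {p q i : ℕ} (hu : IsPQPower u p q)
    (ho : u = (List.range u.length).map fun k => w (i + k)) :
    ∀ j, j + q < p → w (i + j) = w (i + j + q) := by
  intro j hj
  have hlen : u.length = p := hu.2.2.1
  have hval : ∀ k (hk : k < u.length), u[k] = w (i + k) := by
    intro k hk
    have h2 := List.getElem_of_eq ho hk
    simpa using h2
  have hpre := pq_drop_prefix hu
  have hjlt : j < (u.drop q).length := by simp [hlen]; omega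
  have := hpre.getElem hjlt
  rw [List.getElem_drop] at this
  have e1 := hval (q + j) (by omega)
  have e2 := hval j (by omega)
  rw [e2] at this
  rw [e1] at this
  rw [show i + j + q = i + (q + j) by omega]
  exact this.symm

/-! ### Critical exponent bounds -/

lemma contains_rep {w : ℕ → ℕ} {c n0 : ℕ} (hw : ∀ k, n0 ≤ k → w k = c) (N : ℕ) (hN : 0 < N) :
    ContainsPowInf w (N : ℚ) := by
  refine ⟨List.replicate N c, ⟨n0, ?_⟩, (N:ℚ), le_refl _, N, 1, ?_, by norm_num⟩
  · apply List.ext_getElem (by simp)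
    intro k h1 h2
    simp only [List.getElem_replicate, List.getElem_map, List.getElem_range]
    exact (hw (n0 + k) (by omega)).symm
  · exact ⟨hN, one_pos, by simp, [c], [], N, by simp, hN, List.nil_prefix,
      by simp, by simp [flatten_rep_singleton]⟩

lemma einf_top {w : ℕ → ℕ} {c n0 : ℕ} (hw : ∀ k, n0 ≤ k → w k = c) : Einf w = ⊤ := by
  rw [Einf, sSup_eq_top]
  intro b hb
  obtain ⟨n, hn⟩ : ∃ n : ℕ, b < ((n:ℝ):EReal) := by
    induction b using EReal.rec with
    | bot => exact ⟨1, EReal.bot_lt_coe _⟩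
    | coe x => obtain ⟨n, hn⟩ := exists_nat_gt x; exact ⟨n, by exact_mod_cast hn⟩
    | top => simp at hb
  refine ⟨(((n+1 : ℕ):ℚ):ℝ), ⟨((n+1:ℕ):ℚ), contains_rep hw (n+1) (by omega), rfl⟩, ?_⟩
  refine lt_of_lt_of_le hn ?_
  have : ((n:ℝ)) ≤ (((n+1:ℕ):ℚ):ℝ) := by push_cast; linarith
  exact_mod_cast this

lemma einf_tail_tm {w : ℕ → ℕ} {L : ℕ} (hw : ∀ k, L ≤ k → w k = (tm (k - L) : ℕ)) :
    ((2:ℝ):EReal) ≤ Einf w ∧ Einf w ≤ (((2+L : ℕ):ℝ):EReal) := by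
  constructor
  · have mem : (((2:ℚ):ℝ):EReal) ∈
        {x : EReal | ∃ r : ℚ, ContainsPowInf w r ∧ x = ((r : ℝ) : EReal)} := by
      refine ⟨2, ⟨[1,1], ⟨L+1, ?_⟩, 2, le_refl _, 2, 1, ?_, by norm_num⟩, rfl⟩
      · have h1 : w (L+1) = 1 := by rw [hw (L+1) (by omega)]; simp [tm_one]
        have h2 : w (L+2) = 1 := by rw [hw (L+2) (by omega)]; simp [tm_two]
        simp [List.range_succ, h1, show L+1+1 = L+2 by omega, h2]
      · exact ⟨by norm_num, one_pos, by simp, [1], [], 2, by simp, by norm_num,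
          List.nil_prefix, by simp, by simp [flatten_rep_singleton]⟩
    have := le_sSup mem
    rw [Einf]
    convert this using 2
    try norm_num
  · rw [Einf]
    apply sSup_le
    rintro x ⟨r, ⟨u, ⟨i, ho⟩, s, hrs, p, q, hP, hs⟩, rfl⟩
    have hp : 0 < p := hP.1
    have hq : 0 < q := hP.2.1
    have hper := occ_period hP ho
    have hple : p ≤ 2*q + L := by
      by_contra hcon
      push_neg at hcon
      set M := max i L with hM
      have hM1 : i ≤ M := le_max_left _ _
      have hM2 : L ≤ M := le_max_right _ _
      have hM3 : M ≤ i + L := by rcases max_choice i L with h | h <;> omega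
      refine tm_of q hq (M - L) ?_
      intro j hj
      have h1 := hper (M + j - i) (by omega)
      rw [show i + (M + j - i) = M + j by omega] at h1
      have e1 : w (M + j) = (tm (M - L + j) : ℕ) := by
        rw [hw (M+j) (by omega), show M + j - L = M - L + j by omega]
      have e2 : w (M + j + q) = (tm (M - L + j + q) : ℕ) := by
        rw [hw (M+j+q) (by omega), show M + j + q - L = M - L + j + q by omega]
      rw [e1, e2] at h1
      exact Fin.val_injective h1
    have hsle : s ≤ ((2+L : ℕ):ℚ) := by
      rw [hs, div_le_iff₀ (by exact_mod_cast hq)]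
      have hnat : p ≤ (2+L)*q := by
        have hLq : L ≤ L*q := Nat.le_mul_of_pos_right L hq
        calc p ≤ 2*q + L := hple
          _ ≤ 2*q + L*q := by omega
          _ = (2+L)*q := by ring
      exact_mod_cast hnat
    have : r ≤ ((2+L:ℕ):ℚ) := le_trans hrs hsle
    rw [EReal.coe_le_coe_iff]
    exact_mod_cast this

/-! ### The tail sums of the Thue--Morse real -/

noncomputable def Ttail (j : ℕ) : ℝ := ∑' i : ℕ, ((tm (j+i) : ℕ) : ℝ) / 2 ^ (i + 1)

lemma T_summable (j : ℕ) : Summable (fun i : ℕ => ((tm (j+i) : ℕ) : ℝ) / 2 ^ (i + 1)) := by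
  apply Summable.of_nonneg_of_le (fun i => by positivity) (fun i => ?_) summable_geometric_two
  have hv : ((tm (j+i) : ℕ):ℝ) ≤ 1 := by exact_mod_cast Fin.is_le (tm (j+i))
  calc ((tm (j+i) : ℕ):ℝ) / 2 ^ (i + 1) ≤ 1 / 2 ^ (i+1) := by gcongr
    _ = (1/2:ℝ)^(i+1) := by rw [one_div_pow]
    _ ≤ (1/2:ℝ)^i := pow_le_pow_of_le_one (by norm_num) (by norm_num) (Nat.le_succ i)

lemma T_rec (j : ℕ) : Ttail j = (((tm j : ℕ):ℝ) + Ttail (j+1)) / 2 := by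
  have h := Summable.tsum_eq_zero_add (T_summable j)
  have h2 : (fun i : ℕ => ((tm (j+(i+1)) : ℕ) : ℝ) / 2 ^ (i + 1 + 1))
      = fun i : ℕ => (((tm ((j+1)+i) : ℕ) : ℝ) / 2 ^ (i + 1)) * (1/2) := by
    funext i
    rw [show j+(i+1) = (j+1)+i by omega]
    ring
  rw [Ttail, h, h2, tsum_mul_right]
  rw [show (∑' (i:ℕ), ((tm ((j+1)+i) : ℕ) : ℝ) / 2 ^ (i + 1)) = Ttail (j+1) from rfl]
  ring_nf

lemma T_nonneg (j : ℕ) : 0 ≤ Ttail j := tsum_nonneg (fun i => by positivity)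

lemma fin2_resolve : ∀ a b : Fin 2, a ≠ b → (a = 0 ∧ b = 1) ∨ (a = 1 ∧ b = 0) := by decide

lemma tm_window (j : ℕ) : (∃ i, tm (j+i) = 0) ∧ (∃ i, tm (j+i) = 1) := by
  by_cases h01 : tm j = tm (j+1)
  · have hne : tm (j+1) ≠ tm (j+2) := fun h => no_three j ⟨h01, h⟩
    rcases fin2_resolve _ _ hne with ⟨h1, h2⟩ | ⟨h1, h2⟩
    · exact ⟨⟨1, h1⟩, ⟨2, h2⟩⟩
    · exact ⟨⟨2, h2⟩, ⟨1, h1⟩⟩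
  · rcases fin2_resolve _ _ h01 with ⟨h1, h2⟩ | ⟨h1, h2⟩
    · exact ⟨⟨0, h1⟩, ⟨1, h2⟩⟩
    · exact ⟨⟨1, h2⟩, ⟨0, h1⟩⟩

lemma tm_le_one (j : ℕ) : ((tm j : ℕ):ℝ) ≤ 1 := by exact_mod_cast Fin.is_le (tm j)
lemma tm_nonneg' (j : ℕ) : (0:ℝ) ≤ ((tm j : ℕ):ℝ) := by positivity

lemma T_pos (j : ℕ) : 0 < Ttail j := by
  obtain ⟨i, hi⟩ := (tm_window j).2
  induction i generalizing j with
  | zero =>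
    simp only [Nat.add_zero] at hi
    rw [T_rec j, hi]
    have := T_nonneg (j+1)
    norm_num; linarith
  | succ i ih =>
    have hi' : tm ((j+1)+i) = 1 := by rw [show (j+1)+i = j + (i+1) by omega]; exact hi
    have := ih (j+1) hi'
    rw [T_rec j]
    have := tm_nonneg' j
    linarith

lemma T_le_one (j : ℕ) : Ttail j ≤ 1 := by
  have hsum : ∑' i : ℕ, ((1:ℝ)/2)^i * (1/2) = 1 := by
    rw [tsum_mul_right, tsum_geometric_two]; norm_num
  rw [Ttail, ← hsum]
  apply Summable.tsum_le_tsum _ (T_summable j) (summable_geometric_two.mul_right _)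
  intro i
  have hv := tm_le_one (j+i)
  calc ((tm (j+i) : ℕ):ℝ) / 2 ^ (i + 1) ≤ 1 / 2 ^ (i+1) := by gcongr
    _ = (1/2:ℝ)^i * (1/2) := by rw [one_div_pow]; ring

lemma T_lt_one (j : ℕ) : Ttail j < 1 := by
  obtain ⟨i, hi⟩ := (tm_window j).1
  induction i generalizing j with
  | zero =>
    simp only [Nat.add_zero] at hi
    rw [T_rec j, hi]
    have h1 : Ttail (j+1) ≤ 1 := T_le_one (j+1)
    norm_num; linarith
  | succ i ih =>
    have hi' : tm ((j+1)+i) = 0 := by rw [show (j+1)+i = j + (i+1) by omega]; exact hi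
    have := ih (j+1) hi'
    rw [T_rec j]
    have := tm_le_one j
    linarith

noncomputable def Mdigits : ℕ → ℤ :=
  fun j => Nat.rec 0 (fun j' Mj => 2 * Mj + ((tm j' : ℕ) : ℤ)) j
lemma M_zero : Mdigits 0 = 0 := rfl
lemma M_succ (j : ℕ) : Mdigits (j+1) = 2 * Mdigits j + ((tm j : ℕ) : ℤ) := rfl

lemma xtau_pow (j : ℕ) : xtau * 2^j = (Mdigits j : ℝ) + Ttail j := by
  induction j with
  | zero =>
    have : xtau = Ttail 0 := by
      rw [xtau, Ttail]
      exact tsum_congr fun i => by rw [Nat.zero_add]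
    simp [this, M_zero]
  | succ j ih =>
    have h2 : 2 * Ttail j = ((tm j : ℕ):ℝ) + Ttail (j+1) := by rw [T_rec j]; ring
    calc xtau * 2^(j+1) = (xtau * 2^j) * 2 := by ring
      _ = ((Mdigits j:ℝ) + Ttail j) * 2 := by rw [ih]
      _ = (Mdigits j : ℝ) * 2 + 2 * Ttail j := by ring
      _ = (Mdigits (j+1) : ℝ) + Ttail (j+1) := by rw [h2, M_succ]; push_cast; ring

lemma ceil_T (j : ℕ) : ⌈Ttail j⌉ = 1 := by
  rw [Int.ceil_eq_iff]
  constructor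
  · push_cast; linarith [T_pos j]
  · push_cast; linarith [T_lt_one j]

lemma xtau_pos : 0 < xtau := by
  have := xtau_pow 0
  simp [M_zero] at this
  rw [this]; exact T_pos 0

lemma xtau_lt_one : xtau < 1 := by
  have := xtau_pow 0
  simp [M_zero] at this
  rw [this]; exact T_lt_one 0

/-! ### Digit computations -/

lemma digit_mix (n m : ℕ) (k : ℕ) (hk : n ≤ k) :
    baseDigit 2 (((m:ℝ) + xtau) / 2^n) k = (tm (k - n) : ℕ) := by
  set y : ℝ := ((m:ℝ) + xtau) / 2^n with hy
  have hx0 : 0 < xtau := xtau_pos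
  have hypos : 0 < y := by positivity
  have hceil : ∀ j : ℕ, ⌈y * 2^(n + j)⌉ = (m:ℤ) * 2^j + Mdigits j + 1 := by
    intro j
    have hyv : y * 2^(n+j) = (((m:ℤ) * 2^j + Mdigits j : ℤ):ℝ) + Ttail j := by
      have h2n : (2:ℝ)^n ≠ 0 := by positivity
      have hA : y * 2^(n+j) = ((m:ℝ)+xtau) * 2^j := by
        rw [hy, pow_add]; field_simp
      rw [hA]
      push_cast
      have := xtau_pow j
      nlinarith [xtau_pow j]
    rw [hyv, add_comm, Int.ceil_add_intCast, ceil_T]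
    ring
  rw [baseDigit, if_neg (not_le.mpr hypos)]
  simp only [Nat.cast_ofNat]
  have e1 := hceil (k - n)
  have e2 := hceil (k - n + 1)
  rw [show n + (k - n) = k by omega] at e1
  rw [show n + (k - n + 1) = k + 1 by omega] at e2
  rw [e1, e2, M_succ]
  push_cast
  have : ((m:ℤ) * 2 ^ (k - n + 1) + (2 * Mdigits (k-n) + ((tm (k-n)).val : ℤ)) + 1 -
      2 * ((m:ℤ) * 2 ^ (k - n) + Mdigits (k-n) + 1) + 1) = ((tm (k-n)).val : ℤ) := by
    ring
  rw [this]
  simp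

lemma digit_dyadic (n m : ℕ) (hm : 0 < m) (k : ℕ) (hk : n ≤ k) :
    baseDigit 2 ((m:ℝ) / 2^n) k = 1 := by
  set y : ℝ := (m:ℝ) / 2^n with hy
  have hypos : 0 < y := by positivity
  have hceil : ∀ j : ℕ, ⌈y * 2^(n + j)⌉ = (m:ℤ) * 2^j := by
    intro j
    have hA : y * 2^(n+j) = (((m:ℤ) * 2^j : ℤ):ℝ) := by
      have h2n : (2:ℝ)^n ≠ 0 := by positivity
      rw [hy, pow_add]; push_cast; field_simp
    rw [hA, Int.ceil_intCast]
  rw [baseDigit, if_neg (not_le.mpr hypos)]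
  simp only [Nat.cast_ofNat]
  have e1 := hceil (k - n)
  have e2 := hceil (k - n + 1)
  rw [show n + (k - n) = k by omega] at e1
  rw [show n + (k - n + 1) = k + 1 by omega] at e2
  rw [e1, e2]
  have : ((m:ℤ) * 2 ^ (k - n + 1) - 2 * ((m:ℤ) * 2 ^ (k - n)) + (2-1)) = 1 := by ring
  rw [this]
  rfl

lemma digit_zero_fun (k : ℕ) : baseDigit 2 0 k = 0 := by
  rw [baseDigit, if_pos le_rfl]

/-! ### Values of kappa2 -/

lemma kappa_dyadic_s7 (n m : ℕ) : kappa2 ((m:ℝ) / 2^n) = 0 := by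
  rcases Nat.eq_zero_or_pos m with hm | hm
  · subst hm
    have h0 : ((0:ℕ):ℝ) / 2^n = 0 := by norm_num
    rw [kappa2, kappaBase, h0, einf_top (c := 0) (n0 := 0) (fun k _ => digit_zero_fun k)]
    simp
  · rw [kappa2, kappaBase,
      einf_top (c := 1) (n0 := n) (fun k hk => digit_dyadic n m hm k hk)]
    simp

lemma kappa_mix (n m : ℕ) : kappa2 (((m:ℝ) + xtau) / 2^n) ≠ 0 := by
  have hw : ∀ k, n ≤ k → baseDigit 2 (((m:ℝ) + xtau) / 2^n) k = (tm (k - n) : ℕ) :=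
    fun k hk => digit_mix n m k hk
  obtain ⟨hlo, hup⟩ := einf_tail_tm hw
  set E := Einf (baseDigit 2 (((m:ℝ) + xtau) / 2^n)) with hE
  have hnetop : E ≠ ⊤ := (lt_of_le_of_lt hup (EReal.coe_lt_top _)).ne
  have h2 : (2:ℝ) ≤ E.toReal := by
    calc (2:ℝ) = ((2:ℝ):EReal).toReal := (EReal.toReal_coe 2).symm
      _ ≤ E.toReal := EReal.toReal_le_toReal hlo (EReal.coe_ne_bot _) hnetop
  rw [kappa2, kappaBase]
  exact one_div_ne_zero (by linarith)

/-! ### Density -/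

lemma approx_nat (t : ℝ) (ht0 : 0 ≤ t) (ht1 : t ≤ 1) (n : ℕ) :
    ∃ m : ℕ, m + 1 ≤ 2^n ∧ (m:ℝ) ≤ t * 2^n ∧ t * 2^n ≤ (m:ℝ) + 1 := by
  have h2n : (0:ℝ) < 2^n := by positivity
  have hnn : (0:ℝ) ≤ t * 2^n := by positivity
  have hfl0 : 0 ≤ ⌊t * 2^n⌋ := Int.floor_nonneg.mpr hnn
  have hfl_le : ((⌊t * 2^n⌋:ℤ):ℝ) ≤ t * 2^n := Int.floor_le _
  have hfl_lt : t * 2^n < ((⌊t * 2^n⌋:ℤ):ℝ) + 1 := Int.lt_floor_add_one _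
  have hpow : ((2^n : ℕ) : ℤ) = (2:ℤ)^n := by push_cast; ring
  have hcast2 : ∀ z : ℤ, 0 ≤ z → ((z.toNat : ℕ):ℝ) = ((z:ℤ):ℝ) := by
    intro z hz
    exact_mod_cast congrArg (Int.cast : ℤ → ℝ) (Int.toNat_of_nonneg hz)
  by_cases hc : ⌊t * 2^n⌋ < (2:ℤ)^n
  · refine ⟨⌊t * 2^n⌋.toNat, by omega, ?_, ?_⟩
    · rw [hcast2 _ hfl0]; exact hfl_le
    · rw [hcast2 _ hfl0]; linarith
  · push_neg at hc
    have hub : t * 2^n ≤ 2^n := by nlinarith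
    have hlb : ((2:ℝ)^n) ≤ t * 2^n := by
      have h1 : ((2:ℝ)^n) ≤ ((⌊t * 2^n⌋:ℤ):ℝ) := by exact_mod_cast hc
      linarith
    have hone : (1:ℕ) ≤ 2^n := Nat.one_le_two_pow
    have hcast : ((2^n - 1 : ℕ):ℝ) = (2:ℝ)^n - 1 := by
      push_cast [hone]
      ring
    exact ⟨2^n - 1, by omega, by rw [hcast]; linarith, by rw [hcast]; linarith⟩

lemma dense_aux {P : ℝ → Prop}
    (h : ∀ t, t ∈ Set.Icc (0:ℝ) 1 → ∀ ε : ℝ, 0 < ε →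
      ∃ y, y ∈ Set.Icc (0:ℝ) 1 ∧ P y ∧ |y - t| < ε) :
    Dense {x : Set.Icc (0 : ℝ) 1 | P ↑x} := by
  rw [Metric.dense_iff]
  intro x r hr
  obtain ⟨y, hy1, hy2, hy3⟩ := h x x.2 r hr
  refine ⟨⟨y, hy1⟩, Metric.mem_ball.mpr ?_, hy2⟩
  rw [Subtype.dist_eq]
  simpa [Real.dist_eq] using hy3

lemma exists_small_pow (ε : ℝ) (hε : 0 < ε) : ∃ n : ℕ, (1:ℝ) / 2^n < ε := by
  obtain ⟨n, hn⟩ := exists_pow_lt_of_lt_one hε (by norm_num : (1:ℝ)/2 < 1)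
  exact ⟨n, by rwa [one_div_pow] at hn⟩

lemma dense_zero : Dense {x : Set.Icc (0 : ℝ) 1 | kappa2 ↑x = 0} := by
  apply dense_aux (P := fun y => kappa2 y = 0)
  rintro t ⟨ht0, ht1⟩ ε hε
  obtain ⟨n, hn⟩ := exists_small_pow ε hε
  obtain ⟨m, hm1, hm2, hm3⟩ := approx_nat t ht0 ht1 n
  have h2n : (0:ℝ) < 2^n := by positivity
  have hm1' : (m:ℝ) + 1 ≤ 2^n := by exact_mod_cast hm1
  have hA : (m:ℝ)/2^n ≤ t := (div_le_iff₀ h2n).mpr hm2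
  have hB : t ≤ ((m:ℝ)+1)/2^n := (le_div_iff₀ h2n).mpr hm3
  have hsplit : ((m:ℝ)+1)/2^n = (m:ℝ)/2^n + 1/2^n := by ring
  refine ⟨(m:ℝ) / 2^n, ⟨by positivity, ?_⟩, kappa_dyadic_s7 n m, ?_⟩
  · rw [div_le_one h2n]; linarith
  · have habs : |(m:ℝ)/2^n - t| ≤ 1/2^n := by
      rw [abs_le]
      constructor <;> [linarith [hsplit]; linarith]
    linarith
lemma dense_nonzero : Dense {x : Set.Icc (0 : ℝ) 1 | kappa2 ↑x ≠ 0} := by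
  apply dense_aux (P := fun y => kappa2 y ≠ 0)
  rintro t ⟨ht0, ht1⟩ ε hε
  obtain ⟨n, hn⟩ := exists_small_pow ε hε
  obtain ⟨m, hm1, hm2, hm3⟩ := approx_nat t ht0 ht1 n
  have h2n : (0:ℝ) < 2^n := by positivity
  have hm1' : (m:ℝ) + 1 ≤ 2^n := by exact_mod_cast hm1
  have hxt0 := xtau_pos
  have hxt1 := xtau_lt_one
  have hA : (m:ℝ)/2^n ≤ t := (div_le_iff₀ h2n).mpr hm2
  have hB : t ≤ ((m:ℝ)+1)/2^n := (le_div_iff₀ h2n).mpr hm3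
  have hsplit : ((m:ℝ)+1)/2^n = (m:ℝ)/2^n + 1/2^n := by ring
  have hyeq : ((m:ℝ) + xtau)/2^n = (m:ℝ)/2^n + xtau/2^n := by ring
  have hx1 : xtau/2^n < 1/2^n := by gcongr
  have hx0 : 0 < xtau/2^n := by positivity
  refine ⟨((m:ℝ) + xtau) / 2^n, ⟨by positivity, ?_⟩, kappa_mix n m, ?_⟩
  · rw [div_le_one h2n]; linarith
  · have habs : |((m:ℝ) + xtau)/2^n - t| < 1/2^n := by
      rw [abs_sub_lt_iff]
      constructor
      · rw [hyeq]; linarith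
      · rw [hyeq]; linarith
    linarith

end Aux

theorem stmt_7 :
    Dense {x : Set.Icc (0 : ℝ) 1 | kappa2 ↑x = 0} ∧
    Dense {x : Set.Icc (0 : ℝ) 1 | kappa2 ↑x ≠ 0} ∧
    ¬ IsOpen {x : Set.Icc (0 : ℝ) 1 | kappa2 ↑x = 0} ∧
    ¬ IsClosed {x : Set.Icc (0 : ℝ) 1 | kappa2 ↑x = 0} := by
  have hCd := dense_zero
  have hDd := dense_nonzero
  have hCne : {x : Set.Icc (0 : ℝ) 1 | kappa2 ↑x = 0}.Nonempty :=
    hCd.nonempty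
  have hDne : {x : Set.Icc (0 : ℝ) 1 | kappa2 ↑x ≠ 0}.Nonempty :=
    hDd.nonempty
  refine ⟨hCd, hDd, ?_, ?_⟩
  · intro hopen
    obtain ⟨x, hx1, hx2⟩ := hDd.inter_open_nonempty _ hopen hCne
    exact hx2 hx1
  · intro hclosed
    have : {x : Set.Icc (0 : ℝ) 1 | kappa2 ↑x = 0} = Set.univ := by
      rw [← hclosed.closure_eq]
      exact hCd.closure_eq
    obtain ⟨x, hx⟩ := hDne
    exact hx (by rw [Set.eq_univ_iff_forall] at this; exact this x)
end
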